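/- arXiv:2212.01026 — 4 statements merged into one kernel-verified Lean document; each statement's English description precedes it below -/
import Mathlib

section
/- (Proposition 1.) Let H̃(H; r) = H − H q qᵀ / ‖q‖₂² where q = (HᵀH)^k r. Then the expectation over r ∼ N(0, I_d) of the random matrix H̃(H; r) equals U Σ̃ Vᵀ, where Σ̃ = diag((1−λ_1(k))σ_1, (1−λ_2(k))σ_2, …, (1−λ_d(k))σ_d). -/
open MeasureTheory ProbabilityTheory Matrix

/-- The standard Gaussian measure `N(0, I_d)` on `ℝ^d`, as the `d`-fold product of the
standard real Gaussian. -/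
noncomputable def stdGaussian (d : ℕ) : Measure (Fin d → ℝ) :=
  Measure.pi (fun _ => gaussianReal 0 1)

section Aux

open Real ENNReal

/-- lintegral of products of functions of separate coordinates over product Lebesgue measure. -/
theorem lintegral_fin_nat_prod' {n : ℕ} (f : Fin n → ℝ → ℝ≥0∞) (hf : ∀ i, Measurable (f i)) :
    ∫⁻ x : Fin n → ℝ, ∏ i, f i (x i) ∂(Measure.pi fun _ => (volume : Measure ℝ)) =
      ∏ i, ∫⁻ x, f i x := by
  induction n with
  | zero => simp
  | succ n ih =>
    rw [← ((measurePreserving_piFinSuccAbove (fun _ : Fin (n+1) => (volume : Measure ℝ))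
        0).symm).lintegral_comp_emb (MeasurableEquiv.measurableEmbedding _)]
    simp only [MeasurableEquiv.piFinSuccAbove_symm_apply, Fin.prod_univ_succ]
    simp only [Fin.insertNthEquiv, Equiv.coe_fn_mk, Fin.insertNth_apply_same]
    have hrw : ∀ (a : ℝ × (Fin n → ℝ)) (x : Fin n),
        Fin.insertNth (α := fun _ => ℝ) 0 a.1 a.2 x.succ = a.2 x := by
      intro a x
      rw [← Fin.zero_succAbove x, Fin.insertNth_apply_succAbove]
    simp_rw [hrw]
    rw [lintegral_prod_mul (f := fun t => f 0 t)
      (g := fun (x : Fin n → ℝ) => ∏ i, f i.succ (x i)) (hf 0).aemeasurable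
      (Measurable.aemeasurable (Finset.measurable_prod (f := fun i (x : Fin n → ℝ) => f i.succ (x i))
        Finset.univ (fun i _ => by exact (hf i.succ).comp (measurable_pi_apply i))))]
    rw [ih (fun i => f i.succ) (fun i => hf _)]

/-- The standard Gaussian is Lebesgue measure with the product Gaussian density. -/
theorem stdGaussian_eq_withDensity (d : ℕ) :
    stdGaussian d = (Measure.pi fun _ : Fin d => (volume : Measure ℝ)).withDensity
      (fun x => ∏ i, gaussianPDF 0 1 (x i)) := by
  set ν := (Measure.pi fun _ : Fin d => (volume : Measure ℝ)).withDensity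
      (fun x => ∏ i, gaussianPDF 0 1 (x i)) with hν
  have hmeas : Measurable fun x : Fin d → ℝ => ∏ i, gaussianPDF 0 1 (x i) :=
    Finset.measurable_prod Finset.univ
      (fun i _ => by exact (measurable_gaussianPDF 0 1).comp (measurable_pi_apply i))
  have hprob : IsProbabilityMeasure ν := by
    constructor
    rw [hν, withDensity_apply _ MeasurableSet.univ, setLIntegral_univ,
      lintegral_fin_nat_prod' _ (fun _ => measurable_gaussianPDF 0 1)]
    simp [lintegral_gaussianPDF_eq_one 0 one_ne_zero]
  refine Measure.pi_eq (fun s hs => ?_)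
  rw [hν, withDensity_apply _ (MeasurableSet.univ_pi hs),
    ← lintegral_indicator (MeasurableSet.univ_pi hs)]
  have : ∀ x : Fin d → ℝ, (Set.univ.pi s).indicator (fun x => ∏ i, gaussianPDF 0 1 (x i)) x
      = ∏ i, (s i).indicator (gaussianPDF 0 1) (x i) := by
    intro x
    by_cases hx : x ∈ Set.univ.pi s
    · rw [Set.indicator_of_mem hx]
      exact Finset.prod_congr rfl fun i _ =>
        (Set.indicator_of_mem (hx i (Set.mem_univ i)) _).symm
    · rw [Set.indicator_of_notMem hx]
      simp only [Set.mem_pi, Set.mem_univ, forall_true_left, not_forall] at hx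
      obtain ⟨i, hi⟩ := hx
      exact (Finset.prod_eq_zero (Finset.mem_univ i)
        (Set.indicator_of_notMem (show x i ∉ s i by simpa using hi) _)).symm
  simp_rw [this]
  rw [lintegral_fin_nat_prod' _ (fun i => (measurable_gaussianPDF 0 1).indicator (hs i))]
  refine Finset.prod_congr rfl fun i _ => ?_
  rw [lintegral_indicator (hs i), ← gaussianReal_apply 0 one_ne_zero]

theorem sumSq_mulVec {d : ℕ} {V : Matrix (Fin d) (Fin d) ℝ} (hV₁ : Vᵀ * V = 1)
    (x : Fin d → ℝ) : ∑ i, (V *ᵥ x) i ^ 2 = ∑ i, x i ^ 2 := by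
  have h : (V *ᵥ x) ⬝ᵥ (V *ᵥ x) = x ⬝ᵥ x := by
    rw [dotProduct_mulVec, ← vecMul_transpose, vecMul_vecMul, hV₁, vecMul_one]
  simpa [dotProduct, pow_two] using h

theorem gaussianPDF_prod {d : ℕ} (x : Fin d → ℝ) :
    ∏ i, gaussianPDF 0 1 (x i) =
      ENNReal.ofReal ((√(2 * π))⁻¹ ^ d * Real.exp (-(∑ i, x i ^ 2) / 2)) := by
  have h1 : ∀ t : ℝ, gaussianPDFReal 0 1 t = (√(2 * π))⁻¹ * Real.exp (-(t ^ 2) / 2) := by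
    intro t
    simp [gaussianPDFReal]
  simp_rw [gaussianPDF]
  rw [← ENNReal.ofReal_prod_of_nonneg (fun i _ => gaussianPDFReal_nonneg 0 1 (x i))]
  congr 1
  simp_rw [h1]
  rw [Finset.prod_mul_distrib, Finset.prod_const, ← Real.exp_sum]
  congr 2
  · simp
  · rw [← Finset.sum_div, ← Finset.sum_neg_distrib]

/-- Rotation invariance of the standard Gaussian. -/
theorem stdGaussian_map_matrix {d : ℕ} (V : Matrix (Fin d) (Fin d) ℝ)
    (hV₁ : Vᵀ * V = 1) :
    (stdGaussian d).map (fun y => V *ᵥ y) = stdGaussian d := by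
  have hL : Measurable fun y : Fin d → ℝ => V *ᵥ y := by
    refine measurable_pi_lambda _ fun l => ?_
    simp only [Matrix.mulVec, dotProduct]
    exact Finset.measurable_sum _ fun m _ => by exact (measurable_pi_apply m).const_mul _
  have hdet2 : V.det ^ 2 = 1 := by
    have := congrArg Matrix.det hV₁
    simpa [Matrix.det_mul, Matrix.det_transpose, sq, Matrix.det_one] using this
  have hdetne : V.det ≠ 0 := by
    intro h; rw [h] at hdet2; norm_num at hdet2
  have habs : |V.det⁻¹| = 1 := by
    have h3 : (|V.det| - 1) * (|V.det| + 1) = 0 := by nlinarith [sq_abs V.det]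
    rcases mul_eq_zero.mp h3 with h | h
    · rw [abs_inv]; rw [show |V.det| = 1 by linarith]; norm_num
    · nlinarith [abs_nonneg V.det]
  have hvol : (Measure.pi fun _ : Fin d => (volume : Measure ℝ)).map (fun y => V *ᵥ y)
      = Measure.pi fun _ : Fin d => (volume : Measure ℝ) := by
    have hfun : (fun y : Fin d → ℝ => V *ᵥ y) = ⇑(Matrix.toLin' V) := by
      funext y; rw [Matrix.toLin'_apply]
    have := Real.map_matrix_volume_pi_eq_smul_volume_pi hdetne
    rw [MeasureTheory.volume_pi] at this
    rw [hfun, this, habs]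
    simp
  have hg : ∀ x : Fin d → ℝ, (∏ i, gaussianPDF 0 1 ((V *ᵥ x) i)) = ∏ i, gaussianPDF 0 1 (x i) := by
    intro x
    rw [gaussianPDF_prod, gaussianPDF_prod, sumSq_mulVec hV₁]
  have hmeas : Measurable fun x : Fin d → ℝ => ∏ i, gaussianPDF 0 1 (x i) :=
    Finset.measurable_prod Finset.univ
      (fun i _ => by exact (measurable_gaussianPDF 0 1).comp (measurable_pi_apply i))
  rw [stdGaussian_eq_withDensity]
  ext A hA
  rw [Measure.map_apply hL hA, withDensity_apply _ (hL hA), withDensity_apply _ hA,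
    ← lintegral_indicator (hL hA), ← lintegral_indicator hA]
  conv_rhs => rw [← hvol]
  rw [lintegral_map (hmeas.indicator hA) hL]
  refine lintegral_congr fun x => ?_
  by_cases hx : V *ᵥ x ∈ A
  · rw [Set.indicator_of_mem hx, Set.indicator_of_mem (by exact hx), hg]
  · rw [Set.indicator_of_notMem hx, Set.indicator_of_notMem (by exact hx)]

theorem flip_involutive {d : ℕ} (a : Fin d) :
    Function.Involutive (fun (y : Fin d → ℝ) l => (if l = a then (-1:ℝ) else 1) * y l) := by
  intro y; funext l; by_cases h : l = a <;> simp [h]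

theorem flip_measurable {d : ℕ} (a : Fin d) :
    Measurable (fun (y : Fin d → ℝ) l => (if l = a then (-1:ℝ) else 1) * y l) :=
  measurable_pi_lambda _ fun l => (measurable_pi_apply l).const_mul _

/-- The coordinate sign flip as a measurable equiv. -/
noncomputable def flipE (d : ℕ) (a : Fin d) : (Fin d → ℝ) ≃ᵐ (Fin d → ℝ) where
  toEquiv := Function.Involutive.toPerm _ (flip_involutive a)
  measurable_toFun := flip_measurable a
  measurable_invFun := flip_measurable a

theorem flip_measurePreserving (d : ℕ) (a : Fin d) :
    MeasurePreserving (fun (y : Fin d → ℝ) l => (if l = a then (-1:ℝ) else 1) * y l)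
      (stdGaussian d) (stdGaussian d) := by
  refine measurePreserving_pi _ _ (fun i => ?_)
  refine ⟨(measurable_id.const_mul _), ?_⟩
  have := gaussianReal_map_const_mul (μ := 0) (v := 1) (if i = a then (-1:ℝ) else 1)
  rw [show (HMul.hMul (if i = a then (-1:ℝ) else 1) : ℝ → ℝ)
    = (fun x => (if i = a then (-1:ℝ) else 1) * x) from rfl, this]
  by_cases h : i = a <;> simp [h] <;> norm_num

theorem integral_flip_comp {d : ℕ} (a : Fin d) (g : (Fin d → ℝ) → ℝ) :
    ∫ y, g (fun l => (if l = a then (-1:ℝ) else 1) * y l) ∂(stdGaussian d)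
      = ∫ y, g y ∂(stdGaussian d) :=
  (flip_measurePreserving d a).integral_comp (flipE d a).measurableEmbedding g

theorem integral_off_diag_zero {d k : ℕ} (σ : Fin d → ℝ) {a b : Fin d} (hab : a ≠ b) :
    ∫ y, (y a * y b) / (∑ l, σ l ^ (4 * k) * y l ^ 2) ∂(stdGaussian d) = 0 := by
  set g : (Fin d → ℝ) → ℝ := fun y => (y a * y b) / (∑ l, σ l ^ (4 * k) * y l ^ 2) with hg
  have key : ∀ y : Fin d → ℝ, g (fun l => (if l = a then (-1:ℝ) else 1) * y l) = - g y := by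
    intro y
    have hD : ∑ l, σ l ^ (4 * k) * ((if l = a then (-1:ℝ) else 1) * y l) ^ 2
        = ∑ l, σ l ^ (4 * k) * y l ^ 2 :=
      Finset.sum_congr rfl fun l _ => by by_cases h : l = a <;> simp [h]
    simp only [hg]
    rw [hD]
    simp only [if_true, if_neg (Ne.symm hab), one_mul, neg_one_mul, neg_mul, neg_div]
  have h0 := integral_flip_comp a g
  simp_rw [key, integral_neg] at h0
  linarith

theorem conjPow {d : ℕ} (V A : Matrix (Fin d) (Fin d) ℝ) (hV₁ : Vᵀ * V = 1) (hV₂ : V * Vᵀ = 1)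
    (m : ℕ) : (V * A * Vᵀ) ^ m = V * A ^ m * Vᵀ := by
  induction m with
  | zero => simp [hV₂]
  | succ m ih =>
    rw [pow_succ, pow_succ, ih]
    rw [Matrix.mul_assoc (V * A ^ m) Vᵀ (V * A * Vᵀ), ← Matrix.mul_assoc Vᵀ (V * A) Vᵀ,
      ← Matrix.mul_assoc Vᵀ V A, hV₁, Matrix.one_mul]
    rw [Matrix.mul_assoc V (A ^ m) (A * Vᵀ), ← Matrix.mul_assoc (A ^ m) A Vᵀ,
      Matrix.mul_assoc V (A ^ m * A) Vᵀ]

end Aux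

/-- (Proposition 1.)  Let `H̃(H; r) = H − H q qᵀ / ‖q‖₂²` with `q = (HᵀH)^k r`.  Then the
expectation over `r ∼ N(0, I_d)` of `H̃(H; r)` equals `U Σ̃ Vᵀ`, where
`Σ̃ = diag((1−λ_1(k))σ_1, …, (1−λ_d(k))σ_d)` (stated entrywise). -/
theorem expectation_spectral_augmentation
    (n d k : ℕ) (hn : 1 ≤ n) (hd : 1 ≤ d) (hk : 1 ≤ k)
    (H U : Matrix (Fin n) (Fin d) ℝ) (V : Matrix (Fin d) (Fin d) ℝ)
    (σ : Fin d → ℝ) (hσpos : ∀ i, 0 < σ i)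
    (hσsorted : ∀ i j : Fin d, i ≤ j → σ j ≤ σ i)
    (hU : Uᵀ * U = 1) (hV₁ : Vᵀ * V = 1) (hV₂ : V * Vᵀ = 1)
    (hH : H = U * Matrix.diagonal σ * Vᵀ)
    (lam : Fin d → ℝ)
    (hlam : ∀ i, lam i =
      ∫ y, (σ i ^ (4 * k) * (y i) ^ 2) / (∑ l, σ l ^ (4 * k) * (y l) ^ 2)
        ∂(stdGaussian d))
    (q : (Fin d → ℝ) → (Fin d → ℝ))
    (hq : ∀ r, q r = ((Hᵀ * H) ^ k) *ᵥ r)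
    (Htilde : (Fin d → ℝ) → Matrix (Fin n) (Fin d) ℝ)
    (hHtilde : ∀ r, Htilde r =
      H - (∑ l, (q r l) ^ 2)⁻¹ • Matrix.vecMulVec (H *ᵥ q r) (q r)) :
    ∀ i j, ∫ r, Htilde r i j ∂(stdGaussian d) =
      (U * Matrix.diagonal (fun i => (1 - lam i) * σ i) * Vᵀ) i j := by
  intro i j
  haveI : IsProbabilityMeasure (stdGaussian d) := by
    unfold _root_.stdGaussian; infer_instance
  -- matrix algebra
  have hpow : (Hᵀ * H) ^ k = V * Matrix.diagonal (fun l => σ l ^ (2 * k)) * Vᵀ := by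
    have hHtH : Hᵀ * H = V * Matrix.diagonal (fun l => σ l ^ 2) * Vᵀ := by
      rw [hH]
      rw [Matrix.transpose_mul, Matrix.transpose_mul, Matrix.transpose_transpose,
        Matrix.diagonal_transpose]
      simp only [Matrix.mul_assoc]
      rw [← Matrix.mul_assoc Uᵀ U _, hU, Matrix.one_mul,
        ← Matrix.mul_assoc (Matrix.diagonal σ) (Matrix.diagonal σ) Vᵀ,
        Matrix.diagonal_mul_diagonal]
      congr 2
      funext l
      ring
    rw [hHtH, conjPow V _ hV₁ hV₂, Matrix.diagonal_pow,
      show ((fun l => σ l ^ 2) ^ k) = fun l => σ l ^ (2 * k) from funext fun l => by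
        simp [Pi.pow_apply, ← pow_mul, mul_comm]]
  -- q after rotation
  have hq' : ∀ y : Fin d → ℝ,
      q (V *ᵥ y) = (V * Matrix.diagonal fun l => σ l ^ (2 * k)) *ᵥ y := by
    intro y
    rw [hq, hpow, Matrix.mulVec_mulVec, Matrix.mul_assoc _ Vᵀ V, hV₁, Matrix.mul_one]
  have hqent : ∀ (y : Fin d → ℝ) (l : Fin d),
      q (V *ᵥ y) l = ∑ b, V l b * σ b ^ (2 * k) * y b := by
    intro y l
    rw [hq']
    simp only [Matrix.mulVec, dotProduct, Matrix.mul_diagonal]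
  have hsumq : ∀ y : Fin d → ℝ, ∑ l, q (V *ᵥ y) l ^ 2 = ∑ l, σ l ^ (4 * k) * y l ^ 2 := by
    intro y
    have h1 : q (V *ᵥ y) = V *ᵥ (fun l => σ l ^ (2 * k) * y l) := by
      rw [hq', ← Matrix.mulVec_mulVec]
      exact congrArg (fun v => V *ᵥ v) (funext fun l => Matrix.mulVec_diagonal _ _ _)
    rw [h1, sumSq_mulVec hV₁]
    refine Finset.sum_congr rfl fun l _ => ?_
    rw [mul_pow, ← pow_mul, show 2 * k * 2 = 4 * k from by ring]
  have hHqent : ∀ y : Fin d → ℝ,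
      (H *ᵥ q (V *ᵥ y)) i = ∑ a, U i a * σ a ^ (2 * k + 1) * y a := by
    intro y
    rw [hq', Matrix.mulVec_mulVec]
    have hHVd : H * (V * Matrix.diagonal fun l => σ l ^ (2 * k))
        = U * Matrix.diagonal (fun a => σ a ^ (2 * k + 1)) := by
      rw [hH]
      rw [Matrix.mul_assoc (U * Matrix.diagonal σ) Vᵀ _, ← Matrix.mul_assoc Vᵀ V _, hV₁,
        Matrix.one_mul, Matrix.mul_assoc U (Matrix.diagonal σ) _, Matrix.diagonal_mul_diagonal]
      exact congrArg (fun D => U * D) (congrArg Matrix.diagonal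
        (funext fun a => by rw [pow_succ]; ring))
    rw [hHVd]
    simp only [Matrix.mulVec, dotProduct, Matrix.mul_diagonal]
  -- measurability
  have hqm : ∀ l, Measurable fun r : Fin d → ℝ => q r l := by
    intro l
    have : (fun r : Fin d → ℝ => q r l) = fun r => ∑ m, ((Hᵀ * H) ^ k) l m * r m := by
      funext r; rw [hq]; rfl
    rw [this]
    exact Finset.measurable_sum _ fun m _ => by exact (measurable_pi_apply m).const_mul _
  have hFmeas : Measurable fun r : Fin d → ℝ => Htilde r i j := by
    have : (fun r : Fin d → ℝ => Htilde r i j)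
        = fun r => H i j - (∑ l, q r l ^ 2)⁻¹ * ((∑ m, H i m * q r m) * q r j) := by
      funext r
      rw [hHtilde]
      simp [Matrix.sub_apply, Matrix.smul_apply, Matrix.vecMulVec_apply,
        Matrix.mulVec, dotProduct]
    rw [this]
    refine measurable_const.sub (Measurable.mul (Measurable.inv
      (Finset.measurable_sum _ fun l _ => by exact (hqm l).pow_const 2))
      (Measurable.mul (Finset.measurable_sum _ fun m _ => by exact (hqm m).const_mul _)
        (hqm j)))
  have hL : Measurable fun y : Fin d → ℝ => V *ᵥ y := by
    refine measurable_pi_lambda _ fun l => ?_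
    simp only [Matrix.mulVec, dotProduct]
    exact Finset.measurable_sum _ fun m _ => by exact (measurable_pi_apply m).const_mul _
  -- change of variables
  have step1 : ∫ r, Htilde r i j ∂(stdGaussian d)
      = ∫ y, Htilde (V *ᵥ y) i j ∂(stdGaussian d) := by
    have h1 : AEStronglyMeasurable (fun r => Htilde r i j)
        ((stdGaussian d).map (fun y => V *ᵥ y)) := by
      rw [stdGaussian_map_matrix V hV₁]
      exact hFmeas.aestronglyMeasurable
    conv_lhs => rw [← stdGaussian_map_matrix V hV₁]
    exact integral_map hL.aemeasurable h1
  -- pointwise formula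
  have hpt : ∀ y : Fin d → ℝ, Htilde (V *ᵥ y) i j
      = H i j - ∑ a, ∑ b, (U i a * σ a ^ (2 * k + 1)) * (V j b * σ b ^ (2 * k))
          * ((y a * y b) / (∑ l, σ l ^ (4 * k) * y l ^ 2)) := by
    intro y
    rw [hHtilde]
    simp only [Matrix.sub_apply, Matrix.smul_apply, Matrix.vecMulVec_apply, smul_eq_mul]
    rw [hsumq y, hHqent y, hqent y j]
    congr 1
    rw [Finset.sum_mul_sum, Finset.mul_sum]
    refine Finset.sum_congr rfl fun a _ => ?_
    rw [Finset.mul_sum]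
    refine Finset.sum_congr rfl fun b _ => ?_
    rw [div_eq_mul_inv]
    ring
  -- integrability of the elementary pieces
  have hgmeas : ∀ a b : Fin d, Measurable fun y : Fin d → ℝ =>
      (y a * y b) / (∑ l, σ l ^ (4 * k) * y l ^ 2) := fun a b =>
    Measurable.div ((measurable_pi_apply a).mul (measurable_pi_apply b))
      (Finset.measurable_sum _ fun l _ => by
        exact ((measurable_pi_apply l).pow_const 2).const_mul _)
  have hbound : ∀ (a b : Fin d) (y : Fin d → ℝ),
      |(y a * y b) / (∑ l, σ l ^ (4 * k) * y l ^ 2)| ≤ (σ ⟨d - 1, by omega⟩ ^ (4 * k))⁻¹ := by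
    intro a b y
    set ld : Fin d := ⟨d - 1, by omega⟩
    set m0 : ℝ := σ ld ^ (4 * k) with hm0
    have hm0pos : 0 < m0 := pow_pos (hσpos ld) _
    set S : ℝ := ∑ l, y l ^ 2 with hS
    set D : ℝ := ∑ l, σ l ^ (4 * k) * y l ^ 2 with hDdef
    have hDS : m0 * S ≤ D := by
      rw [hS, hDdef, Finset.mul_sum]
      refine Finset.sum_le_sum fun l _ => ?_
      refine mul_le_mul_of_nonneg_right ?_ (sq_nonneg _)
      refine pow_le_pow_left₀ (hσpos ld).le ?_ _
      refine hσsorted l ld ?_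
      rw [Fin.le_def]
      have := l.isLt
      simp only [ld]
      omega
    have hDnonneg : 0 ≤ D :=
      Finset.sum_nonneg fun l _ => mul_nonneg (pow_nonneg (hσpos l).le _) (sq_nonneg _)
    have hnum : |y a * y b| ≤ S := by
      have ha : y a ^ 2 ≤ S :=
        Finset.single_le_sum (fun l _ => sq_nonneg (y l)) (Finset.mem_univ a)
      have hb : y b ^ 2 ≤ S :=
        Finset.single_le_sum (fun l _ => sq_nonneg (y l)) (Finset.mem_univ b)
      have habs : |y a * y b| = |y a| * |y b| := abs_mul _ _
      nlinarith [sq_abs (y a), sq_abs (y b), sq_nonneg (|y a| - |y b|),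
        abs_nonneg (y a), abs_nonneg (y b)]
    by_cases hDz : D = 0
    · rw [hDz, div_zero, abs_zero]
      positivity
    · have hDpos : 0 < D := lt_of_le_of_ne hDnonneg (Ne.symm hDz)
      rw [abs_div, abs_of_pos hDpos, div_le_iff₀ hDpos]
      have h1 : m0⁻¹ * (m0 * S) ≤ m0⁻¹ * D :=
        mul_le_mul_of_nonneg_left hDS (inv_nonneg.mpr hm0pos.le)
      rw [← mul_assoc, inv_mul_cancel₀ hm0pos.ne', one_mul] at h1
      linarith
  have hgint : ∀ a b : Fin d, Integrable (fun y : Fin d → ℝ =>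
      (y a * y b) / (∑ l, σ l ^ (4 * k) * y l ^ 2)) (stdGaussian d) := by
    intro a b
    refine (integrable_const ((σ ⟨d - 1, by omega⟩ ^ (4 * k))⁻¹ : ℝ)).mono'
      (hgmeas a b).aestronglyMeasurable (ae_of_all _ fun y => ?_)
    rw [Real.norm_eq_abs]
    exact hbound a b y
  have hgint' : ∀ a b : Fin d, Integrable (fun y : Fin d → ℝ =>
      (U i a * σ a ^ (2 * k + 1)) * (V j b * σ b ^ (2 * k))
        * ((y a * y b) / (∑ l, σ l ^ (4 * k) * y l ^ 2))) (stdGaussian d) := fun a b =>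
    (hgint a b).const_mul _
  -- main computation
  rw [step1]
  have step2 : ∫ y, Htilde (V *ᵥ y) i j ∂(stdGaussian d)
      = ∫ y, (H i j - ∑ a, ∑ b, (U i a * σ a ^ (2 * k + 1)) * (V j b * σ b ^ (2 * k))
          * ((y a * y b) / (∑ l, σ l ^ (4 * k) * y l ^ 2))) ∂(stdGaussian d) :=
    integral_congr_ae (Filter.Eventually.of_forall hpt)
  rw [step2, integral_sub (integrable_const _)
    (integrable_finset_sum _ fun a _ => integrable_finset_sum _ fun b _ => hgint' a b),
    integral_const, probReal_univ, one_smul,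
    integral_finset_sum _ (fun a _ => integrable_finset_sum _ fun b _ => hgint' a b)]
  have step3 : ∀ a : Fin d,
      ∫ y, (∑ b, (U i a * σ a ^ (2 * k + 1)) * (V j b * σ b ^ (2 * k))
          * ((y a * y b) / (∑ l, σ l ^ (4 * k) * y l ^ 2))) ∂(stdGaussian d)
      = (U i a * σ a ^ (2 * k + 1)) * (V j a * σ a ^ (2 * k)) * (lam a / σ a ^ (4 * k)) := by
    intro a
    rw [integral_finset_sum _ (fun b _ => hgint' a b)]
    have hIdiag : ∫ y, (y a * y a) / (∑ l, σ l ^ (4 * k) * y l ^ 2) ∂(stdGaussian d)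
        = lam a / σ a ^ (4 * k) := by
      have hrw : (fun y : Fin d → ℝ =>
          (σ a ^ (4 * k) * y a ^ 2) / (∑ l, σ l ^ (4 * k) * y l ^ 2))
          = fun y => σ a ^ (4 * k) * ((y a * y a) / (∑ l, σ l ^ (4 * k) * y l ^ 2)) := by
        funext y
        rw [mul_div_assoc, sq]
      have h2 := hlam a
      rw [hrw, integral_const_mul] at h2
      rw [eq_div_iff (pow_ne_zero _ (hσpos a).ne'), mul_comm, ← h2]
    refine Finset.sum_eq_single_of_mem a (Finset.mem_univ a) (fun b _ hba => ?_) |>.trans ?_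
    · rw [integral_const_mul, integral_off_diag_zero σ (Ne.symm hba), mul_zero]
    · rw [integral_const_mul, hIdiag]
  simp_rw [step3]
  -- final algebra
  have hentry : ∀ w : Fin d → ℝ, (U * Matrix.diagonal w * Vᵀ) i j = ∑ a, U i a * w a * V j a := by
    intro w
    rw [Matrix.mul_apply]
    refine Finset.sum_congr rfl fun a _ => ?_
    rw [Matrix.mul_diagonal, Matrix.transpose_apply]
  rw [show H i j = ∑ a, U i a * σ a * V j a from by rw [hH, hentry], hentry,
    ← Finset.sum_sub_distrib]
  refine Finset.sum_congr rfl fun a _ => ?_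
  have hσa : σ a ≠ 0 := (hσpos a).ne'
  have hpowne : σ a ^ (4 * k) ≠ 0 := pow_ne_zero _ hσa
  have hexp : σ a ^ (2 * k + 1) * σ a ^ (2 * k) = σ a * σ a ^ (4 * k) := by
    rw [← pow_add, show 2 * k + 1 + (2 * k) = 4 * k + 1 from by ring, pow_succ]
    ring
  field_simp
  linear_combination (-(U i a * V j a * lam a)) * hexp
end

section
/- Spectrum flattening: for every k ≥ 1 and all indices i, j with σ_i ≥ σ_j > 0, the rebalanced singular values satisfy ((1−λ_i(k)) σ_i) / ((1−λ_j(k)) σ_j) ≤ σ_i / σ_j, provided 1−λ_j(k) > 0; i.e., the output spectrum (1−λ_i(k))σ_i is flatter (has smaller consecutive ratios) than the input spectrum σ_i. -/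
open MeasureTheory ProbabilityTheory

private lemma key_frac_ineq (a b u v R : ℝ) (hab : b ≤ a) (hb : 0 < b) (hu : 0 ≤ u)
    (hv : 0 ≤ v) (hR : 0 ≤ R) (h1 : 0 < a*u + b*v + R) (h2 : 0 < a*v + b*u + R) :
    b*v/(a*u + b*v + R) + b*u/(a*v + b*u + R) ≤ a*u/(a*u + b*v + R) + a*v/(a*v + b*u + R) := by
  rw [div_add_div _ _ (ne_of_gt h1) (ne_of_gt h2), div_add_div _ _ (ne_of_gt h1) (ne_of_gt h2),
    div_le_div_iff_of_pos_right (by positivity)]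
  nlinarith [mul_nonneg (mul_nonneg hR hu) (sub_nonneg.2 hab),
    mul_nonneg (mul_nonneg hR hv) (sub_nonneg.2 hab),
    mul_nonneg (mul_nonneg hu hv) (sub_nonneg.2 hab)]

private lemma pointwise_aux (a b u v R : ℝ) (hab : b ≤ a) (ha : 0 < a) (hb : 0 < b)
    (hu : 0 ≤ u) (hv : 0 ≤ v) (hR : 0 ≤ R) :
    b*v/(a*u + b*v + R) + b*u/(a*v + b*u + R)
      ≤ a*u/(a*u + b*v + R) + a*v/(a*v + b*u + R) := by
  have hau : 0 ≤ a*u := mul_nonneg ha.le hu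
  have hav : 0 ≤ a*v := mul_nonneg ha.le hv
  have hbu : 0 ≤ b*u := mul_nonneg hb.le hu
  have hbv : 0 ≤ b*v := mul_nonneg hb.le hv
  rcases eq_or_lt_of_le (by linarith : (0:ℝ) ≤ a*u + b*v + R) with h1 | h1
  · have hu0 : u = 0 := by nlinarith
    have hv0 : v = 0 := by nlinarith
    have hR0 : R = 0 := by linarith
    rw [hu0, hv0, hR0]; simp
  · rcases eq_or_lt_of_le (by linarith : (0:ℝ) ≤ a*v + b*u + R) with h2 | h2
    · exfalso
      have hu0 : u = 0 := by nlinarith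
      have hv0 : v = 0 := by nlinarith
      have hR0 : R = 0 := by linarith
      rw [hu0, hv0, hR0] at h1; simp at h1
    · exact key_frac_ineq a b u v R hab hb hu hv hR h1 h2

private lemma integral_swap_mono (d : ℕ) (c : Fin d → ℝ) (hc : ∀ l, 0 < c l)
    (i j : Fin d) (hne : i ≠ j) (hij : c j ≤ c i) :
    ∫ y, c j * y j ^ 2 / (∑ l, c l * y l ^ 2) ∂(stdGaussian d)
      ≤ ∫ y, c i * y i ^ 2 / (∑ l, c l * y l ^ 2) ∂(stdGaussian d) := by
  haveI : IsProbabilityMeasure (stdGaussian d) := by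
    unfold _root_.stdGaussian; infer_instance
  have hterm : ∀ (l : Fin d) (y : Fin d → ℝ), 0 ≤ c l * y l ^ 2 :=
    fun l y => mul_nonneg (hc l).le (sq_nonneg _)
  let S : (Fin d → ℝ) → ℝ := fun y => ∑ l, c l * y l ^ 2
  let f : Fin d → (Fin d → ℝ) → ℝ := fun m y => c m * y m ^ 2 / S y
  let Rf : (Fin d → ℝ) → ℝ := fun y => ∑ l ∈ ({i, j} : Finset (Fin d))ᶜ, c l * y l ^ 2
  have hR_nonneg : ∀ y, 0 ≤ Rf y := fun y => Finset.sum_nonneg fun l _ => hterm l y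
  -- the coordinate swap
  obtain ⟨T, hT, hTemb, hTapp⟩ :
      ∃ T : (Fin d → ℝ) → (Fin d → ℝ),
        MeasurePreserving T (stdGaussian d) (stdGaussian d) ∧ MeasurableEmbedding T ∧
        ∀ (y : Fin d → ℝ) (l : Fin d), T y l = y (Equiv.swap i j l) := by
    refine ⟨MeasurableEquiv.piCongrLeft (fun _ : Fin d => ℝ) (Equiv.swap i j),
      measurePreserving_piCongrLeft (fun _ => gaussianReal 0 1) (Equiv.swap i j),
      (MeasurableEquiv.piCongrLeft (fun _ : Fin d => ℝ)
        (Equiv.swap i j)).measurableEmbedding, fun y l => ?_⟩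
    have h1 := MeasurableEquiv.piCongrLeft_apply_apply (β := fun _ : Fin d => ℝ)
      (Equiv.swap i j) y (Equiv.swap i j l)
    rwa [Equiv.swap_apply_self] at h1
  -- decompositions of S
  have hSsplit : ∀ y : Fin d → ℝ, S y = c i * y i ^ 2 + c j * y j ^ 2 + Rf y := by
    intro y
    have h := Finset.sum_add_sum_compl ({i, j} : Finset (Fin d)) (fun l => c l * y l ^ 2)
    rw [Finset.sum_pair hne] at h
    show (∑ l, c l * y l ^ 2) = _
    linarith [h]
  have hSTsplit : ∀ y : Fin d → ℝ, S (T y) = c i * y j ^ 2 + c j * y i ^ 2 + Rf y := by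
    intro y
    have h1 : S (T y) = ∑ l, c l * (y (Equiv.swap i j l)) ^ 2 :=
      Finset.sum_congr rfl fun l _ => by rw [hTapp]
    have h2 := Finset.sum_add_sum_compl ({i, j} : Finset (Fin d))
      (fun l => c l * (y (Equiv.swap i j l)) ^ 2)
    rw [Finset.sum_pair hne] at h2
    have h3 : ∑ l ∈ ({i, j} : Finset (Fin d))ᶜ, c l * (y (Equiv.swap i j l)) ^ 2 = Rf y := by
      refine Finset.sum_congr rfl fun l hl => ?_
      simp only [Finset.mem_compl, Finset.mem_insert, Finset.mem_singleton, not_or] at hl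
      rw [Equiv.swap_apply_of_ne_of_ne hl.1 hl.2]
    rw [Equiv.swap_apply_left, Equiv.swap_apply_right] at h2
    rw [h1, ← h2, h3]
  -- pointwise bounds on f
  have hf01 : ∀ m (y : Fin d → ℝ), f m y ∈ Set.Icc (0:ℝ) 1 := by
    intro m y
    have hSnn : 0 ≤ S y := Finset.sum_nonneg fun l _ => hterm l y
    rcases eq_or_lt_of_le hSnn with hS0 | hSpos
    · show c m * y m ^ 2 / S y ∈ Set.Icc (0:ℝ) 1
      rw [← hS0, div_zero]
      exact ⟨le_refl 0, zero_le_one⟩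
    · constructor
      · exact div_nonneg (hterm m y) hSpos.le
      · show c m * y m ^ 2 / S y ≤ 1
        rw [div_le_one hSpos]
        exact Finset.single_le_sum (fun l _ => hterm l y) (Finset.mem_univ m)
  -- measurability and integrability
  have hf_meas : ∀ m, Measurable (f m) := by
    intro m
    apply Measurable.div
    · exact ((measurable_pi_apply m).pow_const 2).const_mul _
    · exact Finset.measurable_sum _ fun l _ =>
        ((measurable_pi_apply l).pow_const 2).const_mul _
  have int_aux : ∀ g : (Fin d → ℝ) → ℝ, Measurable g → (∀ y, g y ∈ Set.Icc (0:ℝ) 1) →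
      Integrable g (stdGaussian d) := by
    intro g hg hbd
    refine (integrable_const (1:ℝ)).mono' hg.aestronglyMeasurable (ae_of_all _ fun y => ?_)
    rw [Real.norm_eq_abs, abs_of_nonneg (hbd y).1]
    exact (hbd y).2
  have hfi_int : Integrable (f i) (stdGaussian d) := int_aux _ (hf_meas i) (hf01 i)
  have hfj_int : Integrable (f j) (stdGaussian d) := int_aux _ (hf_meas j) (hf01 j)
  have hfiT_int : Integrable (fun y => f i (T y)) (stdGaussian d) :=
    int_aux _ ((hf_meas i).comp hT.measurable) (fun y => hf01 i (T y))
  have hfjT_int : Integrable (fun y => f j (T y)) (stdGaussian d) :=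
    int_aux _ ((hf_meas j).comp hT.measurable) (fun y => hf01 j (T y))
  -- pointwise key inequality
  have hpt : ∀ y : Fin d → ℝ, f j y + f j (T y) ≤ f i y + f i (T y) := by
    intro y
    have hu : (0:ℝ) ≤ y i ^ 2 := sq_nonneg _
    have hv : (0:ℝ) ≤ y j ^ 2 := sq_nonneg _
    have hR := hR_nonneg y
    have hTyi : T y i = y j := by rw [hTapp, Equiv.swap_apply_left]
    have hTyj : T y j = y i := by rw [hTapp, Equiv.swap_apply_right]
    have hfi : f i y = c i * y i ^ 2 / (c i * y i ^ 2 + c j * y j ^ 2 + Rf y) := by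
      show c i * y i ^ 2 / S y = _; rw [hSsplit]
    have hfj : f j y = c j * y j ^ 2 / (c i * y i ^ 2 + c j * y j ^ 2 + Rf y) := by
      show c j * y j ^ 2 / S y = _; rw [hSsplit]
    have hfiT : f i (T y) = c i * y j ^ 2 / (c i * y j ^ 2 + c j * y i ^ 2 + Rf y) := by
      show c i * (T y i) ^ 2 / S (T y) = _; rw [hTyi, hSTsplit]
    have hfjT : f j (T y) = c j * y i ^ 2 / (c i * y j ^ 2 + c j * y i ^ 2 + Rf y) := by
      show c j * (T y j) ^ 2 / S (T y) = _; rw [hTyj, hSTsplit]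
    rw [hfi, hfj, hfiT, hfjT]
    exact pointwise_aux (c i) (c j) (y i ^ 2) (y j ^ 2) (Rf y) hij (hc i) (hc j) hu hv hR
  -- integrate
  have hTi : ∫ y, f i (T y) ∂(stdGaussian d) = ∫ y, f i y ∂(stdGaussian d) :=
    hT.integral_comp hTemb (f i)
  have hTj : ∫ y, f j (T y) ∂(stdGaussian d) = ∫ y, f j y ∂(stdGaussian d) :=
    hT.integral_comp hTemb (f j)
  have hmono : ∫ y, (f j y + f j (T y)) ∂(stdGaussian d)
      ≤ ∫ y, (f i y + f i (T y)) ∂(stdGaussian d) :=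
    integral_mono (hfj_int.add hfjT_int) (hfi_int.add hfiT_int) hpt
  rw [integral_add hfj_int hfjT_int, integral_add hfi_int hfiT_int, hTi, hTj] at hmono
  linarith

/-- Spectrum flattening: for every `k ≥ 1` and all indices `i, j` with `σ_i ≥ σ_j > 0`,
the rebalanced singular values satisfy
`((1−λ_i(k)) σ_i) / ((1−λ_j(k)) σ_j) ≤ σ_i / σ_j`, provided `1 − λ_j(k) > 0`. -/
theorem spectrum_flattening
    (d k : ℕ) (hd : 1 ≤ d) (hk : 1 ≤ k)
    (σ : Fin d → ℝ) (hσpos : ∀ i, 0 < σ i)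
    (hσsorted : ∀ i j : Fin d, i ≤ j → σ j ≤ σ i)
    (lam : Fin d → ℝ)
    (hlam : ∀ i, lam i =
      ∫ y, (σ i ^ (4 * k) * (y i) ^ 2) / (∑ l, σ l ^ (4 * k) * (y l) ^ 2)
        ∂(stdGaussian d)) :
    ∀ i j : Fin d, σ j ≤ σ i → 0 < 1 - lam j →
      ((1 - lam i) * σ i) / ((1 - lam j) * σ j) ≤ σ i / σ j := by
  intro i j hij hj
  have hσi := hσpos i
  have hσj := hσpos j
  suffices h : lam j ≤ lam i by
    rw [div_le_div_iff₀ (by positivity) (by positivity)]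
    nlinarith [mul_pos hσi hσj]
  rcases eq_or_ne i j with rfl | hne
  · exact le_refl _
  rw [hlam i, hlam j]
  exact integral_swap_mono d (fun l => σ l ^ (4 * k)) (fun l => pow_pos (hσpos l) _) i j hne
    (pow_le_pow_left₀ hσj.le hij _)
end

section
/- (Density in Proposition 2.) Let α > 0 and γ > 0. Let u and v be independent real random variables where u has the Gamma distribution with shape 1/2 and scale 2 (density f_u(t) = t^{−1/2} e^{−t/2} / (2^{1/2} Γ(1/2)) for t > 0), and v has the Gamma distribution with shape α and scale 2γ (density f_v(t) = t^{α−1} e^{−t/(2γ)} / ((2γ)^{α} Γ(α)) for t > 0). Then the random variable Z = u/(u+v) takes values in (0,1) and has probability density f_Z(z) = ( γ / (1 − (1−γ)z)² ) · w^{−1/2} (1−w)^{α−1} / B(1/2, α) for z ∈ (0,1), where w = γ z / (1 − (1−γ)z) and B(1/2, α) = Γ(1/2)Γ(α)/Γ(1/2+α) is the Beta function. -/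
open MeasureTheory ProbabilityTheory Real Set
open scoped ENNReal NNReal

section Helpers

lemma key_id (α γ z y : ℝ) (hα : 0 < α) (hγ : 0 < γ) (hz0 : 0 < z) (hz1 : z < 1) (hy : 0 < y) :
    gammaPDFReal α (1/(2*γ)) y * (y / (1-z)^2 *
      gammaPDFReal (1/2) (1/2) (y*z/(1-z))) =
    ((γ / (1 - (1 - γ) * z) ^ 2) *
        ((γ * z / (1 - (1 - γ) * z)) ^ (-(1 / 2) : ℝ) *
          (1 - γ * z / (1 - (1 - γ) * z)) ^ (α - 1)) /
        (Real.Gamma (1 / 2) * Real.Gamma α / Real.Gamma (1 / 2 + α))) *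
      gammaPDFReal (α + 1/2) ((1-(1-γ)*z)/(2*γ*(1-z))) y := by
  have ht : (0:ℝ) < 1 - z := by linarith
  have hD : (0:ℝ) < 1 - (1 - γ) * z := by nlinarith
  have hx : (0:ℝ) < y * z / (1 - z) := by positivity
  have hrw : 1 - γ * z / (1 - (1 - γ) * z) = (1 - z) / (1 - (1 - γ) * z) := by
    rw [eq_div_iff hD.ne', sub_mul, div_mul_cancel₀ _ hD.ne']; ring
  have hG2 : Real.Gamma (1/2 + α) = Real.Gamma (α + 1/2) := by rw [add_comm]
  rw [gammaPDFReal, gammaPDFReal, gammaPDFReal, if_pos hy.le, if_pos hx.le, if_pos hy.le, hrw, hG2]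
  have hGa : (0:ℝ) < Real.Gamma α := Real.Gamma_pos_of_pos hα
  have hGh : (0:ℝ) < Real.Gamma (1/2) := Real.Gamma_pos_of_pos (by norm_num)
  have hGah : (0:ℝ) < Real.Gamma (α + 1/2) := Real.Gamma_pos_of_pos (by linarith)
  have hL : (0:ℝ) < (1/(2*γ)) ^ α / Real.Gamma α * y ^ (α-1) * Real.exp (-(1/(2*γ) * y)) *
      (y / (1-z)^2 * ((1/2:ℝ) ^ (1/2:ℝ) / Real.Gamma (1/2) * (y*z/(1-z)) ^ ((1:ℝ)/2-1) *
        Real.exp (-(1/2 * (y*z/(1-z)))))) := by positivity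
  have hR : (0:ℝ) < (γ / (1 - (1 - γ) * z) ^ 2 *
        ((γ * z / (1 - (1 - γ) * z)) ^ (-(1 / 2) : ℝ) *
          ((1 - z) / (1 - (1 - γ) * z)) ^ (α - 1)) /
        (Real.Gamma (1 / 2) * Real.Gamma α / Real.Gamma (α + 1/2))) *
      (((1-(1-γ)*z)/(2*γ*(1-z))) ^ (α+1/2) / Real.Gamma (α+1/2) * y ^ (α+1/2-1) *
        Real.exp (-((1-(1-γ)*z)/(2*γ*(1-z)) * y))) := by positivity
  rw [← Real.exp_log hL, ← Real.exp_log hR]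
  congr 1
  have h2 : (0:ℝ) < 2 := by norm_num
  have e1 : Real.log (1/(2*γ)) = -(Real.log 2 + Real.log γ) := by
    rw [one_div, Real.log_inv, Real.log_mul two_ne_zero hγ.ne']
  have e2 : Real.log ((1:ℝ)/2) = -Real.log 2 := by rw [one_div, Real.log_inv]
  have p2 : (0:ℝ) < 2 := two_pos
  have ph : (0:ℝ) < 1/2 := one_half_pos
  have q0 : (0:ℝ) < 1/(2*γ) := by positivity
  have q1 : (0:ℝ) < (1/(2*γ))^α := by positivity
  have q2 : (0:ℝ) < y ^ (α-1) := by positivity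
  have q3 : (0:ℝ) < (1/2:ℝ)^((1:ℝ)/2) := by positivity
  have q4 : (0:ℝ) < (y*z/(1-z)) ^ ((1:ℝ)/2-1) := by positivity
  have q9 : (0:ℝ) < γ*z/(1-(1-γ)*z) := by positivity
  have q5 : (0:ℝ) < (γ*z/(1-(1-γ)*z)) ^ (-(1/2):ℝ) := by positivity
  have q10 : (0:ℝ) < (1-z)/(1-(1-γ)*z) := by positivity
  have q6 : (0:ℝ) < ((1-z)/(1-(1-γ)*z)) ^ (α-1) := by positivity
  have q11 : (0:ℝ) < (1-(1-γ)*z)/(2*γ*(1-z)) := by positivity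
  have q7 : (0:ℝ) < ((1-(1-γ)*z)/(2*γ*(1-z))) ^ (α+1/2) := by positivity
  have q8 : (0:ℝ) < y ^ (α+1/2-1) := by positivity
  have q12 : ((1-z):ℝ)^2 ≠ 0 := by positivity
  have q13 : ((1-(1-γ)*z):ℝ)^2 ≠ 0 := by positivity
  simp (config := { maxDischargeDepth := 20 }) only [Real.log_mul, Real.log_div, Real.log_rpow, Real.log_exp, Real.log_pow,
    div_pos, mul_pos, pow_pos, div_ne_zero, mul_ne_zero, pow_ne_zero, Real.exp_ne_zero,
    hy, ht, hD, hγ, hz0, hGa, hGh, hGah, p2, ph,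
    hy.ne', ht.ne', hD.ne', hγ.ne', hz0.ne', hGa.ne', hGh.ne', hGah.ne', p2.ne', ph.ne',
    Real.exp_pos, Real.exp_ne_zero,
    q0, q1, q2, q3, q4, q5, q6, q7, q8, q9, q10, q11, q12, q13,
    q0.ne', q1.ne', q2.ne', q3.ne', q4.ne', q5.ne', q6.ne', q7.ne', q8.ne', q9.ne',
    q10.ne', q11.ne', hx, hx.ne',
    ne_eq, not_false_eq_true, e1, e2]
  field_simp
  ring

/-- lintegral over ℝ of a function vanishing on negatives equals that over `Ioi 0`. -/
lemma lintegral_eq_Ioi {f : ℝ → ℝ≥0∞} (h : ∀ y < 0, f y = 0) :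
    ∫⁻ y, f y = ∫⁻ y in Set.Ioi (0:ℝ), f y := by
  rw [← lintegral_add_compl f measurableSet_Ioi, compl_Ioi]
  have h1 : ∫⁻ y in Set.Iic (0:ℝ), f y = ∫⁻ y in Set.Iio (0:ℝ), f y :=
    (setLIntegral_congr (Iio_ae_eq_Iic (μ := volume) (a := 0))).symm
  have h2 : ∫⁻ y in Set.Iio (0:ℝ), f y = 0 := by
    rw [setLIntegral_congr_fun_ae measurableSet_Iio (ae_of_all _ fun y hy => h y hy)]
    simp
  rw [h1, h2, add_zero]

lemma setLIntegral_inter_Ioi {f : ℝ → ℝ≥0∞} (hf : ∀ x ≤ 0, f x = 0)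
    {A : Set ℝ} (hA : MeasurableSet A) :
    ∫⁻ x in A, f x = ∫⁻ x in A ∩ Set.Ioi 0, f x := by
  rw [← lintegral_indicator hA, ← lintegral_indicator (hA.inter measurableSet_Ioi)]
  congr 1
  funext x
  by_cases hx : 0 < x
  · by_cases hAx : x ∈ A <;>
      simp [Set.indicator, hAx, hx]
  · simp [Set.indicator, hf x (not_lt.mp hx), hx]

lemma gammaPDF_half_zero_of_nonpos {x : ℝ} (hx : x ≤ 0) : gammaPDF (1/2) (1/2) x = 0 := by
  rcases lt_or_eq_of_le hx with h | h
  · exact gammaPDF_of_neg h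
  · subst h
    rw [gammaPDF_of_nonneg le_rfl]
    rw [Real.zero_rpow (by norm_num : (1:ℝ)/2 - 1 ≠ 0)]
    simp

lemma setLIntegral_gammaPDF_Ioi {a r : ℝ} (ha : 0 < a) (hr : 0 < r) :
    ∫⁻ y in Set.Ioi (0:ℝ), gammaPDF a r y = 1 := by
  have h1 := lintegral_gammaPDF_eq_one ha hr
  rw [lintegral_eq_Ioi (fun y hy => gammaPDF_of_neg hy)] at h1
  exact h1

lemma image_phi {y : ℝ} (hy : 0 < y) (s : Set ℝ) :
    (fun z => y * z / (1 - z)) '' (Set.Ioo 0 1 ∩ s) = {x | x / (x + y) ∈ s} ∩ Set.Ioi 0 := by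
  ext x
  constructor
  · rintro ⟨z, ⟨⟨hz0, hz1⟩, hzs⟩, rfl⟩
    have ht : 0 < 1 - z := by linarith
    have he : y * z / (1 - z) / (y * z / (1 - z) + y) = z := by
      have hsum : y * z / (1 - z) + y = y / (1 - z) := by field_simp; ring
      rw [hsum]
      rw [div_div_div_eq]
      field_simp
    refine ⟨by rw [mem_setOf_eq, he]; exact hzs, mem_Ioi.mpr (by positivity)⟩
  · rintro ⟨hxs, hx⟩
    have hx : (0:ℝ) < x := hx
    have hxy : (0:ℝ) < x + y := by linarith
    refine ⟨x / (x + y), ⟨⟨by positivity, (div_lt_one hxy).mpr (by linarith)⟩, hxs⟩, ?_⟩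
    show y * (x / (x + y)) / (1 - x / (x + y)) = x
    have h1 : 1 - x / (x + y) = y / (x + y) := by field_simp; ring
    rw [h1, mul_div_assoc', div_div_div_eq]
    field_simp


lemma section_x (s : Set ℝ) (hs : MeasurableSet s) {y : ℝ} (hy : 0 < y) :
    ∫⁻ x in {x | x / (x + y) ∈ s}, gammaPDF (1/2) (1/2) x
      = ∫⁻ z in Set.Ioo 0 1 ∩ s,
          ENNReal.ofReal (y / (1 - z)^2) * gammaPDF (1/2) (1/2) (y * z / (1 - z)) := by
  have hset : MeasurableSet {x : ℝ | x / (x + y) ∈ s} :=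
    (measurable_id.div (measurable_id.add measurable_const)) hs
  rw [setLIntegral_inter_Ioi (fun x hx => gammaPDF_half_zero_of_nonpos hx) hset,
    ← image_phi hy s]
  have hT : MeasurableSet (Set.Ioo (0:ℝ) 1 ∩ s) := measurableSet_Ioo.inter hs
  have hderiv : ∀ z ∈ Set.Ioo (0:ℝ) 1 ∩ s,
      HasFDerivWithinAt (fun z => y * z / (1 - z))
        ((1 : ℝ →L[ℝ] ℝ).smulRight (y / (1 - z)^2)) (Set.Ioo (0:ℝ) 1 ∩ s) z := by
    intro z hz
    have ht : (0:ℝ) < 1 - z := by have := hz.1.2; linarith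
    have h := ((hasDerivAt_id z).const_mul y).div ((hasDerivAt_id z).const_sub 1) ht.ne'
    have heq : (y * 1 * (1 - z) - y * z * (-1)) / (1 - z) ^ 2 = y / (1 - z)^2 := by
      congr 1; ring
    simp only [id_eq] at h
    rw [heq] at h
    exact h.hasDerivWithinAt.hasFDerivWithinAt
  have hinj : Set.InjOn (fun z => y * z / (1 - z)) (Set.Ioo (0:ℝ) 1 ∩ s) := by
    intro z1 h1 z2 h2 heq
    have ht1 : (0:ℝ) < 1 - z1 := by have := h1.1.2; linarith
    have ht2 : (0:ℝ) < 1 - z2 := by have := h2.1.2; linarith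
    simp only at heq
    have heq' : y * z1 * (1 - z2) = y * z2 * (1 - z1) :=
      (div_eq_div_iff ht1.ne' ht2.ne').mp heq
    have h4 : y * z1 = y * z2 := by linear_combination heq'
    exact mul_left_cancel₀ hy.ne' h4
  rw [lintegral_image_eq_lintegral_abs_det_fderiv_mul volume hT hderiv hinj]
  refine setLIntegral_congr_fun_ae hT (ae_of_all _ fun z hz => ?_)
  have ht : (0:ℝ) < 1 - z := by have := hz.1.2; linarith
  congr 1
  rw [ContinuousLinearMap.det_smulRight, ContinuousLinearMap.one_apply, one_mul]
  rw [abs_of_pos (by positivity)]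

lemma inner_y (α γ : ℝ) (hα : 0 < α) (hγ : 0 < γ) (fZ : ℝ → ℝ)
    (hfZ : ∀ z : ℝ, fZ z =
      (γ / (1 - (1 - γ) * z) ^ 2) *
        ((γ * z / (1 - (1 - γ) * z)) ^ (-(1 / 2) : ℝ) *
          (1 - γ * z / (1 - (1 - γ) * z)) ^ (α - 1)) /
        (Real.Gamma (1 / 2) * Real.Gamma α / Real.Gamma (1 / 2 + α)))
    {z : ℝ} (hz0 : 0 < z) (hz1 : z < 1) :
    ∫⁻ y in Set.Ioi (0:ℝ), gammaPDF α (1/(2*γ)) y *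
        (ENNReal.ofReal (y / (1 - z)^2) * gammaPDF (1/2) (1/2) (y * z / (1 - z)))
      = ENNReal.ofReal (fZ z) := by
  have ht : (0:ℝ) < 1 - z := by linarith
  have hD : (0:ℝ) < 1 - (1 - γ) * z := by nlinarith
  have hr2 : (0:ℝ) < 1/(2*γ) := by positivity
  have hlam : (0:ℝ) < (1 - (1-γ)*z) / (2*γ*(1-z)) := div_pos hD (by positivity)
  have hrw : 1 - γ * z / (1 - (1 - γ) * z) = (1 - z) / (1 - (1 - γ) * z) := by
    rw [eq_div_iff hD.ne', sub_mul, div_mul_cancel₀ _ hD.ne']; ring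
  have hGa : (0:ℝ) < Real.Gamma α := Real.Gamma_pos_of_pos hα
  have hGh : (0:ℝ) < Real.Gamma (1/2) := Real.Gamma_pos_of_pos (by norm_num)
  have hG12a : (0:ℝ) < Real.Gamma (1/2 + α) := Real.Gamma_pos_of_pos (by linarith)
  have hfZnn : 0 ≤ fZ z := by
    rw [hfZ z]
    refine div_nonneg (mul_nonneg (by positivity)
      (mul_nonneg (Real.rpow_nonneg ?_ _) (Real.rpow_nonneg ?_ _)))
      (div_nonneg (mul_nonneg hGh.le hGa.le) hG12a.le)
    · exact div_nonneg (by positivity) hD.le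
    · rw [hrw]; exact (div_pos ht hD).le
  have hpt : ∀ y : ℝ, 0 < y → gammaPDF α (1/(2*γ)) y *
        (ENNReal.ofReal (y / (1 - z)^2) * gammaPDF (1/2) (1/2) (y * z / (1 - z)))
      = ENNReal.ofReal (fZ z) * gammaPDF (α + 1/2) ((1 - (1-γ)*z) / (2*γ*(1-z))) y := by
    intro y hy
    simp only [gammaPDF]
    rw [← ENNReal.ofReal_mul (by positivity : (0:ℝ) ≤ y/(1-z)^2),
      ← ENNReal.ofReal_mul (gammaPDFReal_nonneg hα hr2 y),
      ← ENNReal.ofReal_mul hfZnn]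
    exact congrArg ENNReal.ofReal (by rw [hfZ z]; exact key_id α γ z y hα hγ hz0 hz1 hy)
  rw [setLIntegral_congr_fun_ae measurableSet_Ioi
      (ae_of_all _ (fun y (hy : 0 < y) => hpt y hy)),
    lintegral_const_mul' _ _ ENNReal.ofReal_ne_top,
    setLIntegral_gammaPDF_Ioi (by linarith : (0:ℝ) < α + 1/2) hlam, mul_one]

end Helpers

/-- (Density in Proposition 2.)  Let `u ∼ Gamma(shape 1/2, scale 2)` and
`v ∼ Gamma(shape α, scale 2γ)` be independent.  Then `Z = u/(u+v)` takes values in `(0,1)`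
and has density `z ↦ (γ / (1−(1−γ)z)²) · w^{−1/2}(1−w)^{α−1} / B(1/2,α)` on `(0,1)`, where
`w = γz/(1−(1−γ)z)` and `B(1/2,α) = Γ(1/2)Γ(α)/Γ(1/2+α)`.
(`gammaMeasure a r` is parametrized by shape `a` and *rate* `r = 1/scale`.) -/
theorem density_of_gamma_ratio
    {Ω : Type*} [MeasurableSpace Ω] (μ : Measure Ω) [IsProbabilityMeasure μ]
    (α γ : ℝ) (hα : 0 < α) (hγ : 0 < γ)
    (u v : Ω → ℝ) (hu : Measurable u) (hv : Measurable v)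
    (huv : IndepFun u v μ)
    (hulaw : Measure.map u μ = gammaMeasure (1 / 2) (1 / 2))
    (hvlaw : Measure.map v μ = gammaMeasure α (1 / (2 * γ)))
    (fZ : ℝ → ℝ)
    (hfZ : ∀ z : ℝ, fZ z =
      (γ / (1 - (1 - γ) * z) ^ 2) *
        ((γ * z / (1 - (1 - γ) * z)) ^ (-(1 / 2) : ℝ) *
          (1 - γ * z / (1 - (1 - γ) * z)) ^ (α - 1)) /
        (Real.Gamma (1 / 2) * Real.Gamma α / Real.Gamma (1 / 2 + α))) :
    (∀ᵐ ω ∂μ, u ω / (u ω + v ω) ∈ Set.Ioo (0 : ℝ) 1) ∧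
    Measure.map (fun ω => u ω / (u ω + v ω)) μ =
      volume.withDensity (fun z =>
        ENNReal.ofReal (Set.indicator (Set.Ioo (0 : ℝ) 1) fZ z)) := by
  have hr2 : (0:ℝ) < 1 / (2 * γ) := by positivity
  haveI hP1 : IsProbabilityMeasure (gammaMeasure (1/2) (1/2)) :=
    isProbabilityMeasure_gammaMeasure (by norm_num) (by norm_num)
  haveI hP2 : IsProbabilityMeasure (gammaMeasure α (1/(2*γ))) :=
    isProbabilityMeasure_gammaMeasure hα hr2
  -- a.e. positivity of u and v
  have law_pos : ∀ (w : Ω → ℝ) (hw : Measurable w) (a r : ℝ),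
      Measure.map w μ = gammaMeasure a r → ∀ᵐ ω ∂μ, 0 < w ω := by
    intro w hw a r hlaw
    rw [ae_iff]
    have hset : {ω | ¬ 0 < w ω} = w ⁻¹' Set.Iic 0 := by
      ext ω; simp [not_lt]
    rw [hset, ← Measure.map_apply hw measurableSet_Iic, hlaw, gammaMeasure,
      withDensity_apply _ measurableSet_Iic,
      ← setLIntegral_congr (Iio_ae_eq_Iic (μ := volume) (a := 0)),
      lintegral_gammaPDF_of_nonpos le_rfl]
  have hu0 : ∀ᵐ ω ∂μ, 0 < u ω := law_pos u hu _ _ hulaw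
  have hv0 : ∀ᵐ ω ∂μ, 0 < v ω := law_pos v hv _ _ hvlaw
  have part1 : ∀ᵐ ω ∂μ, u ω / (u ω + v ω) ∈ Set.Ioo (0 : ℝ) 1 := by
    filter_upwards [hu0, hv0] with ω h1 h2
    constructor
    · positivity
    · rw [div_lt_one (by linarith)]; linarith
  refine ⟨part1, ?_⟩
  -- joint law
  have hpair : Measure.map (fun ω => (u ω, v ω)) μ =
      (gammaMeasure (1/2) (1/2)).prod (gammaMeasure α (1/(2*γ))) := by
    rw [← hulaw, ← hvlaw]
    exact (indepFun_iff_map_prod_eq_prod_map_map hu.aemeasurable hv.aemeasurable).mp huv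
  have hg : Measurable (fun p : ℝ × ℝ => p.1 / (p.1 + p.2)) :=
    measurable_fst.div (measurable_fst.add measurable_snd)
  have hmap : Measure.map (fun ω => u ω / (u ω + v ω)) μ =
      Measure.map (fun p : ℝ × ℝ => p.1 / (p.1 + p.2))
        ((gammaMeasure (1/2) (1/2)).prod (gammaMeasure α (1/(2*γ)))) := by
    rw [← hpair, Measure.map_map hg (hu.prodMk hv)]
    rfl
  rw [hmap]
  ext s hs
  rw [Measure.map_apply hg hs, withDensity_apply _ hs]
  have hsm : MeasurableSet ((fun p : ℝ × ℝ => p.1 / (p.1 + p.2)) ⁻¹' s) := hg hs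
  have hpdf1 : Measurable (gammaPDF (1/2) (1/2)) := (measurable_gammaPDFReal _ _).ennreal_ofReal
  have hpdf2 : Measurable (gammaPDF α (1/(2*γ))) := (measurable_gammaPDFReal _ _).ennreal_ofReal
  have hF : Measurable (fun y => gammaMeasure (1/2) (1/2)
      ((fun x => (x, y)) ⁻¹' ((fun p : ℝ × ℝ => p.1 / (p.1 + p.2)) ⁻¹' s))) :=
    measurable_measure_prodMk_right hsm
  rw [Measure.prod_apply_symm hsm]
  rw [show gammaMeasure α (1/(2*γ)) = volume.withDensity (gammaPDF α (1/(2*γ))) from rfl]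
  rw [lintegral_withDensity_eq_lintegral_mul volume hpdf2 hF]
  rw [lintegral_eq_Ioi (fun y hy => by simp [Pi.mul_apply, gammaPDF_of_neg hy])]
  have hT : MeasurableSet (Set.Ioo (0:ℝ) 1 ∩ s) := measurableSet_Ioo.inter hs
  have hstep : ∀ y : ℝ, 0 < y →
      (gammaPDF α (1/(2*γ)) * fun y => gammaMeasure (1/2) (1/2)
        ((fun x => (x, y)) ⁻¹' ((fun p : ℝ × ℝ => p.1 / (p.1 + p.2)) ⁻¹' s))) y
      = ∫⁻ z in Set.Ioo 0 1 ∩ s, gammaPDF α (1/(2*γ)) y *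
          (ENNReal.ofReal (y / (1 - z)^2) * gammaPDF (1/2) (1/2) (y * z / (1 - z))) := by
    intro y hy
    have hAy : MeasurableSet ((fun x : ℝ => (x, y)) ⁻¹'
        ((fun p : ℝ × ℝ => p.1 / (p.1 + p.2)) ⁻¹' s)) :=
      (measurable_prodMk_right (y := y)) hsm
    simp only [Pi.mul_apply]
    rw [show gammaMeasure (1/2) (1/2) = volume.withDensity (gammaPDF (1/2) (1/2)) from rfl,
      withDensity_apply _ hAy]
    rw [show ((fun x : ℝ => (x, y)) ⁻¹' ((fun p : ℝ × ℝ => p.1 / (p.1 + p.2)) ⁻¹' s))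
      = {x : ℝ | x / (x + y) ∈ s} from rfl]
    rw [section_x s hs hy]
    rw [← lintegral_const_mul' _ _ (by simp [gammaPDF] : gammaPDF α (1/(2*γ)) y ≠ ⊤)]
  rw [setLIntegral_congr_fun_ae measurableSet_Ioi
    (ae_of_all _ (fun y (hy : 0 < y) => hstep y hy))]
  have hH : AEMeasurable (Function.uncurry fun (y z : ℝ) => gammaPDF α (1/(2*γ)) y *
      (ENNReal.ofReal (y / (1 - z)^2) * gammaPDF (1/2) (1/2) (y * z / (1 - z))))
      ((volume.restrict (Set.Ioi 0)).prod (volume.restrict (Set.Ioo 0 1 ∩ s))) := by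
    refine Measurable.aemeasurable ?_
    exact (hpdf2.comp measurable_fst).mul
      (((measurable_fst.div ((measurable_const.sub measurable_snd).pow measurable_const)).ennreal_ofReal).mul
        (hpdf1.comp ((measurable_fst.mul measurable_snd).div (measurable_const.sub measurable_snd))))
  rw [lintegral_lintegral_swap hH]
  rw [setLIntegral_congr_fun_ae hT (ae_of_all _ (fun z hz =>
    inner_y α γ hα hγ fZ hfZ hz.1.1 hz.1.2))]
  have hind : (fun z => ENNReal.ofReal (Set.indicator (Set.Ioo (0:ℝ) 1) fZ z))
      = Set.indicator (Set.Ioo (0:ℝ) 1) (fun z => ENNReal.ofReal (fZ z)) := by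
    funext z
    by_cases hz : z ∈ Set.Ioo (0:ℝ) 1 <;> simp [Set.indicator_apply, hz]
  rw [hind, lintegral_indicator measurableSet_Ioo,
    Measure.restrict_restrict measurableSet_Ioo]
end

section
/- (Expectation in Proposition 2, with the Gauss hypergeometric function ₂F₁(3/2, 1/2+α; 3/2+α; 1−γ) written via its Euler integral representation.) Let α > 0 and γ > 0. Let u and v be independent real random variables where u has the Gamma distribution with shape 1/2 and scale 2 and v has the Gamma distribution with shape α and scale 2γ. Then E[ u/(u+v) ] = γ^{1/2} · ( Γ(3/2) Γ(1/2+α) / ( Γ(1/2) Γ(3/2+α) ) ) · ( Γ(3/2+α) / Γ(1/2+α) ) · ∫₀¹ t^{α−1/2} (1 − (1−γ)t)^{−3/2} dt; equivalently, E[ u/(u+v) ] = (√γ / 2) ∫₀¹ t^{α−1/2} (1 − (1−γ)t)^{−3/2} dt. -/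
open MeasureTheory ProbabilityTheory Real
open Set

lemma integrableOn_rpow_exp {p c : ℝ} (hp : 0 < p) (hc : 0 < c) :
    IntegrableOn (fun x : ℝ => x ^ (p - 1) * rexp (-(c * x))) (Ioi 0) := by
  have := integrableOn_rpow_mul_exp_neg_mul_rpow (p := 1) (s := p - 1) (b := c)
    (by linarith) one_pos hc
  refine this.congr_fun (fun x hx => ?_) measurableSet_Ioi
  beta_reduce
  rw [Real.rpow_one, neg_mul]

lemma lint_rpow_exp {p c : ℝ} (hp : 0 < p) (hc : 0 < c) :
    ∫⁻ x in Ioi 0, ENNReal.ofReal (x ^ (p - 1) * rexp (-(c * x)))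
      = ENNReal.ofReal ((1 / c) ^ p * Real.Gamma p) := by
  rw [← integral_rpow_mul_exp_neg_mul_Ioi hp hc,
    ofReal_integral_eq_lintegral_ofReal (integrableOn_rpow_exp hp hc)]
  filter_upwards [self_mem_ae_restrict (measurableSet_Ioi : MeasurableSet (Ioi (0:ℝ)))] with x hx
  have : (0:ℝ) < x := hx
  positivity

/-- Laplace transform of the gamma pdf times `y^k` (k = 0 or 1 handled by general `b`):
∫⁻ y in Ioi 0, ofReal (gammaPDFReal a r y * (y ^ b * exp (-(s*y))))
  = ofReal (r^a/Γ a * ((1/(r+s))^(a+b) * Γ (a+b))) -/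
lemma lint_gammaPDF_mul {a r b s : ℝ} (ha : 0 < a) (hab : 0 < a + b) (hr : 0 < r) (hs : 0 ≤ s) :
    ∫⁻ y in Ioi 0, ENNReal.ofReal (gammaPDFReal a r y * (y ^ b * rexp (-(s * y))))
      = ENNReal.ofReal (r ^ a / Real.Gamma a * ((1 / (r + s)) ^ (a + b) * Real.Gamma (a + b))) := by
  have hrs : 0 < r + s := by linarith
  have : ∀ y ∈ Ioi (0:ℝ),
      ENNReal.ofReal (gammaPDFReal a r y * (y ^ b * rexp (-(s * y))))
        = ENNReal.ofReal (r ^ a / Real.Gamma a)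
          * ENNReal.ofReal (y ^ (a + b - 1) * rexp (-((r + s) * y))) := by
    intro y hy
    have hy : (0:ℝ) < y := hy
    rw [← ENNReal.ofReal_mul (by positivity)]
    congr 1
    rw [gammaPDFReal, if_pos hy.le]
    rw [show a + b - 1 = (a - 1) + b by ring, Real.rpow_add hy,
      show -((r + s) * y) = -(r * y) + -(s * y) by ring, Real.exp_add]
    ring
  rw [setLIntegral_congr_fun_ae measurableSet_Ioi (Filter.Eventually.of_forall this),
    lintegral_const_mul', lint_rpow_exp hab hrs, ← ENNReal.ofReal_mul (by positivity)]
  · exact ENNReal.ofReal_ne_top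

lemma lintegral_gammaMeasure {a r : ℝ} (G : ℝ → ENNReal) (hG : Measurable G) :
    ∫⁻ x, G x ∂(gammaMeasure a r)
      = ∫⁻ x in Ioi 0, ENNReal.ofReal (gammaPDFReal a r x) * G x := by
  have hm : Measurable (gammaPDF a r) := (measurable_gammaPDFReal a r).ennreal_ofReal
  rw [gammaMeasure, lintegral_withDensity_eq_lintegral_mul _ hm hG]
  simp only [Pi.mul_apply]
  have : ∫⁻ x, gammaPDF a r x * G x
      = (∫⁻ x in Ioi 0, gammaPDF a r x * G x) + ∫⁻ x in Iic 0, gammaPDF a r x * G x := by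
    rw [← lintegral_add_compl (fun x => gammaPDF a r x * G x) measurableSet_Ioi, compl_Ioi]
  rw [this]
  have h0 : ∫⁻ x in Iic 0, gammaPDF a r x * G x = 0 := by
    rw [← setLIntegral_congr Iio_ae_eq_Iic]
    rw [setLIntegral_congr_fun_ae measurableSet_Iio
      (Filter.Eventually.of_forall (fun x (hx : x < 0) => by
        rw [gammaPDF_of_neg hx, zero_mul])), lintegral_zero]
  rw [h0, add_zero]
  rfl

lemma lint_exp_inv {c : ℝ} (hc : 0 < c) :
    ∫⁻ s in Ioi 0, ENNReal.ofReal (rexp (-(c * s))) = ENNReal.ofReal (1 / c) := by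
  have := lint_rpow_exp (p := 1) one_pos hc
  simp only [sub_self, Real.rpow_zero, one_mul, Real.rpow_one, Real.Gamma_one, mul_one] at this
  exact this

lemma core {α γ : ℝ} (hα : 0 < α) (hγ : 0 < γ) :
    ∫⁻ p : ℝ × ℝ, ENNReal.ofReal (p.1 / (p.1 + p.2))
        ∂((gammaMeasure (1/2) (1/2)).prod (gammaMeasure α (1/(2*γ))))
      = ∫⁻ s in Ioi 0,
          ENNReal.ofReal ((1/2 : ℝ) ^ ((1:ℝ)/2) / Real.Gamma (1/2)
              * ((1 / (1/2 + s)) ^ ((1:ℝ)/2 + 1) * Real.Gamma (1/2 + 1)))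
            * ENNReal.ofReal ((1/(2*γ) : ℝ) ^ α / Real.Gamma α
              * ((1 / (1/(2*γ) + s)) ^ (α + 0) * Real.Gamma (α + 0))) := by
  have hr2 : (0:ℝ) < 1/(2*γ) := by positivity
  have : IsProbabilityMeasure (gammaMeasure α (1/(2*γ))) :=
    isProbabilityMeasure_gammaMeasure hα hr2
  have hfm : Measurable fun p : ℝ × ℝ => ENNReal.ofReal (p.1 / (p.1 + p.2)) :=
    (measurable_fst.div (measurable_fst.add measurable_snd)).ennreal_ofReal
  rw [lintegral_prod _ hfm.aemeasurable]
  rw [lintegral_gammaMeasure _ (by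
    apply Measurable.lintegral_prod_right (f := fun x y => ENNReal.ofReal (x / (x + y)))
    exact hfm)]
  -- now rewrite the inner integral for each x > 0
  have step1 : ∀ x ∈ Ioi (0:ℝ),
      ENNReal.ofReal (gammaPDFReal (1/2) (1/2) x)
          * ∫⁻ y, ENNReal.ofReal (x / (x + y)) ∂(gammaMeasure α (1/(2*γ)))
        = ENNReal.ofReal (gammaPDFReal (1/2) (1/2) x)
          * ∫⁻ s in Ioi 0,
              ENNReal.ofReal (x ^ (1:ℝ) * rexp (-(s * x)))
                * ENNReal.ofReal ((1/(2*γ) : ℝ) ^ α / Real.Gamma α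
                  * ((1 / (1/(2*γ) + s)) ^ (α + 0) * Real.Gamma (α + 0))) := by
    intro x hx
    have hx : (0:ℝ) < x := hx
    congr 1
    rw [lintegral_gammaMeasure _ (by
      exact (measurable_const.div (measurable_const.add measurable_id)).ennreal_ofReal)]
    have inner1 : ∀ y ∈ Ioi (0:ℝ),
        ENNReal.ofReal (gammaPDFReal α (1/(2*γ)) y) * ENNReal.ofReal (x / (x + y))
          = ∫⁻ s in Ioi 0, ENNReal.ofReal (x * rexp (-(s * x))
              * (gammaPDFReal α (1/(2*γ)) y * (y ^ (0:ℝ) * rexp (-(s * y))))) := by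
      intro y hy
      have hy : (0:ℝ) < y := hy
      have hxy : (0:ℝ) < x + y := by linarith
      have hpdf : 0 ≤ gammaPDFReal α (1/(2*γ)) y := gammaPDFReal_nonneg hα hr2 y
      have : ENNReal.ofReal (gammaPDFReal α (1/(2*γ)) y) * ENNReal.ofReal (x / (x + y))
          = ENNReal.ofReal (gammaPDFReal α (1/(2*γ)) y * x) * ENNReal.ofReal (1 / (x + y)) := by
        rw [← ENNReal.ofReal_mul hpdf, ← ENNReal.ofReal_mul (by positivity)]
        congr 1
        field_simp
      rw [this, ← lint_exp_inv hxy, ← lintegral_const_mul' _ _ ENNReal.ofReal_ne_top]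
      refine setLIntegral_congr_fun_ae measurableSet_Ioi (Filter.Eventually.of_forall ?_)
      intro s hs
      rw [← ENNReal.ofReal_mul (by positivity)]
      congr 1
      rw [Real.rpow_zero, show -((x + y) * s) = -(s * x) + -(s * y) by ring, Real.exp_add]
      ring
    rw [setLIntegral_congr_fun_ae measurableSet_Ioi (Filter.Eventually.of_forall inner1)]
    rw [lintegral_lintegral_swap (by
      apply Measurable.aemeasurable
      apply Measurable.ennreal_ofReal
      apply Measurable.mul
      · exact (measurable_const.mul ((measurable_snd.mul measurable_const).neg.exp))
      · exact ((measurable_gammaPDFReal _ _).comp measurable_fst).mul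
          ((measurable_fst.pow_const _).mul ((measurable_snd.mul measurable_fst).neg.exp)))]
    refine setLIntegral_congr_fun_ae measurableSet_Ioi (Filter.Eventually.of_forall ?_)
    intro s hs
    have hs : (0:ℝ) < s := hs
    have : ∀ y ∈ Ioi (0:ℝ), ENNReal.ofReal (x * rexp (-(s * x))
          * (gammaPDFReal α (1/(2*γ)) y * (y ^ (0:ℝ) * rexp (-(s * y)))))
        = ENNReal.ofReal (x * rexp (-(s * x)))
          * ENNReal.ofReal (gammaPDFReal α (1/(2*γ)) y * (y ^ (0:ℝ) * rexp (-(s * y)))) := by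
      intro y hy
      rw [← ENNReal.ofReal_mul (by positivity)]
    rw [setLIntegral_congr_fun_ae measurableSet_Ioi (Filter.Eventually.of_forall this),
      lintegral_const_mul' _ _ ENNReal.ofReal_ne_top,
      lint_gammaPDF_mul hα (by linarith) hr2 hs.le, Real.rpow_one]
  rw [setLIntegral_congr_fun_ae measurableSet_Ioi (Filter.Eventually.of_forall step1)]
  -- pull the pdf factor inside and swap x and s
  have step2 : ∀ x ∈ Ioi (0:ℝ),
      ENNReal.ofReal (gammaPDFReal (1/2) (1/2) x)
          * ∫⁻ s in Ioi 0,
              ENNReal.ofReal (x ^ (1:ℝ) * rexp (-(s * x)))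
                * ENNReal.ofReal ((1/(2*γ) : ℝ) ^ α / Real.Gamma α
                  * ((1 / (1/(2*γ) + s)) ^ (α + 0) * Real.Gamma (α + 0)))
        = ∫⁻ s in Ioi 0,
            ENNReal.ofReal (gammaPDFReal (1/2) (1/2) x * (x ^ (1:ℝ) * rexp (-(s * x))))
              * ENNReal.ofReal ((1/(2*γ) : ℝ) ^ α / Real.Gamma α
                  * ((1 / (1/(2*γ) + s)) ^ (α + 0) * Real.Gamma (α + 0))) := by
    intro x hx
    have hx : (0:ℝ) < x := hx
    rw [← lintegral_const_mul' _ _ ENNReal.ofReal_ne_top]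
    refine setLIntegral_congr_fun_ae measurableSet_Ioi (Filter.Eventually.of_forall ?_)
    intro s hs
    rw [← mul_assoc, ← ENNReal.ofReal_mul (gammaPDFReal_nonneg (by norm_num) (by norm_num) x)]
  rw [setLIntegral_congr_fun_ae measurableSet_Ioi (Filter.Eventually.of_forall step2)]
  rw [lintegral_lintegral_swap (by
    apply Measurable.aemeasurable
    simp only [Function.uncurry_def]
    apply Measurable.fun_mul
    · exact (((measurable_gammaPDFReal _ _).comp measurable_fst).mul
        ((measurable_fst.pow_const _).mul ((measurable_snd.mul measurable_fst).neg.exp))).ennreal_ofReal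
    · exact (measurable_const.mul (((measurable_const.add measurable_snd).inv.const_mul _ |>.pow_const _).mul measurable_const)).ennreal_ofReal)]
  refine setLIntegral_congr_fun_ae measurableSet_Ioi (Filter.Eventually.of_forall ?_)
  intro s hs
  have hs : (0:ℝ) < s := hs
  rw [lintegral_mul_const' _ _ ENNReal.ofReal_ne_top,
    lint_gammaPDF_mul (by norm_num : (0:ℝ) < 1/2) (by norm_num : (0:ℝ) < 1/2 + 1)
      (by norm_num : (0:ℝ) < 1/2) hs.le]

lemma hw_pos {γ t : ℝ} (hγ : 0 < γ) (ht : 0 < t) (ht1 : t ≤ 1) : 0 < 1 - (1-γ)*t := by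
  rcases le_or_gt (1-γ) 0 with h | h
  · nlinarith
  · nlinarith

lemma rpow_algebra {γ t α : ℝ} (hγ : 0 < γ) (hα : 0 < α) (ht : 0 < t) (ht1 : t < 1) :
    1/(2*γ*t^2) * ((1/2:ℝ)^((1:ℝ)/2)/Real.Gamma (1/2)
        * (((2*γ*t)/(1-(1-γ)*t))^((1:ℝ)/2+1) * Real.Gamma ((1:ℝ)/2+1)))
      * ((1/(2*γ))^α/Real.Gamma α * ((2*γ*t)^(α+0) * Real.Gamma (α+0)))
    = Real.sqrt γ / 2 * (t^(α-1/2) * (1-(1-γ)*t)^(-(3:ℝ)/2)) := by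
  have hw : 0 < 1 - (1-γ)*t := hw_pos hγ ht ht1.le
  have hΓh : Real.Gamma ((1:ℝ)/2+1) = (1/2) * Real.Gamma (1/2) :=
    Real.Gamma_add_one (by norm_num)
  have hΓhpos : 0 < Real.Gamma ((1:ℝ)/2) := Real.Gamma_pos_of_pos (by norm_num)
  have hΓh1 : 0 < Real.Gamma ((1:ℝ)/2+1) := by rw [hΓh]; positivity
  have hΓα : 0 < Real.Gamma α := Real.Gamma_pos_of_pos hα
  have hΓα0 : 0 < Real.Gamma (α+0) := by rw [add_zero]; positivity
  have hL : 0 < 1/(2*γ*t^2) * ((1/2:ℝ)^((1:ℝ)/2)/Real.Gamma (1/2)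
        * (((2*γ*t)/(1-(1-γ)*t))^((1:ℝ)/2+1) * Real.Gamma ((1:ℝ)/2+1)))
      * ((1/(2*γ))^α/Real.Gamma α * ((2*γ*t)^(α+0) * Real.Gamma (α+0))) := by positivity
  have hR : 0 < Real.sqrt γ / 2 * (t^(α-1/2) * (1-(1-γ)*t)^(-(3:ℝ)/2)) := by positivity
  rw [← Real.exp_log hL, ← Real.exp_log hR]
  congr 1
  rw [Real.sqrt_eq_rpow, hΓh, add_zero]
  simp (disch := positivity) only [Real.log_mul, Real.log_div, Real.log_rpow, Real.log_pow,
    Real.log_one, Real.log_inv]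
  push_cast
  ring

lemma integrable_h {α γ : ℝ} (hα : 0 < α) (hγ : 0 < γ) :
    IntegrableOn (fun t : ℝ => t^(α-1/2) * (1-(1-γ)*t)^(-(3:ℝ)/2)) (Ioo 0 1) := by
  have hg : IntegrableOn (fun t : ℝ => t^(α-1/2)) (Ioo 0 1) := by
    have h1 := intervalIntegral.intervalIntegrable_rpow' (a := 0) (b := 1) (r := α-1/2) (by linarith)
    have h2 := (intervalIntegrable_iff_integrableOn_Ioc_of_le zero_le_one).mp h1
    exact h2.mono_set Ioo_subset_Ioc_self
  have hm0 : 0 < min 1 γ := lt_min one_pos hγ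
  have hbound : ∀ᵐ t ∂(volume.restrict (Ioo (0:ℝ) 1)),
      ‖(1-(1-γ)*t)^(-(3:ℝ)/2)‖ ≤ (min 1 γ)^(-(3:ℝ)/2) := by
    filter_upwards [self_mem_ae_restrict measurableSet_Ioo] with t ht
    obtain ⟨h0, h1t⟩ := ht
    have hle : min 1 γ ≤ 1-(1-γ)*t := by
      have m1 : min 1 γ ≤ 1 := min_le_left _ _
      have m2 : min 1 γ ≤ γ := min_le_right _ _
      nlinarith
    rw [Real.norm_eq_abs, abs_of_nonneg (Real.rpow_nonneg (by linarith) _)]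
    exact Real.rpow_le_rpow_of_nonpos hm0 hle (by norm_num)
  have hmeas : AEStronglyMeasurable (fun t : ℝ => (1-(1-γ)*t)^(-(3:ℝ)/2))
      (volume.restrict (Ioo (0:ℝ) 1)) := by
    apply Measurable.aestronglyMeasurable
    fun_prop
  exact (Integrable.bdd_mul hg hmeas hbound).congr (Filter.Eventually.of_forall fun t => mul_comm _ _)

lemma cov {α γ : ℝ} (hα : 0 < α) (hγ : 0 < γ) :
    ∫⁻ s in Ioi 0,
        ENNReal.ofReal ((1/2 : ℝ) ^ ((1:ℝ)/2) / Real.Gamma (1/2)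
            * ((1 / (1/2 + s)) ^ ((1:ℝ)/2 + 1) * Real.Gamma (1/2 + 1)))
          * ENNReal.ofReal ((1/(2*γ) : ℝ) ^ α / Real.Gamma α
            * ((1 / (1/(2*γ) + s)) ^ (α + 0) * Real.Gamma (α + 0)))
      = ENNReal.ofReal (Real.sqrt γ / 2
          * ∫ t in (0:ℝ)..1, t ^ (α - 1/2) * (1 - (1 - γ) * t) ^ (-(3:ℝ)/2)) := by
  set g : ℝ → ℝ := fun s => (1/2 : ℝ) ^ ((1:ℝ)/2) / Real.Gamma (1/2)
      * ((1 / (1/2 + s)) ^ ((1:ℝ)/2 + 1) * Real.Gamma (1/2 + 1))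
      * ((1/(2*γ) : ℝ) ^ α / Real.Gamma α
      * ((1 / (1/(2*γ) + s)) ^ (α + 0) * Real.Gamma (α + 0))) with hg
  set f : ℝ → ℝ := fun t => (1 - t)/(2*γ*t) with hf
  have hΓh : Real.Gamma ((1:ℝ)/2+1) = (1/2) * Real.Gamma (1/2) :=
    Real.Gamma_add_one (by norm_num)
  have hΓhpos : 0 < Real.Gamma ((1:ℝ)/2) := Real.Gamma_pos_of_pos (by norm_num)
  have hΓh1 : 0 < Real.Gamma ((1:ℝ)/2+1) := by rw [hΓh]; positivity
  have hΓα0 : 0 < Real.Gamma (α+0) := by rw [add_zero]; exact Real.Gamma_pos_of_pos hα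
  have hgpos : ∀ s : ℝ, 0 < s → 0 < g s := by
    intro s hs
    have h1 : (0:ℝ) < 1/2 + s := by linarith
    have h2 : (0:ℝ) < 1/(2*γ) + s := by positivity
    rw [hg]; positivity
  -- image of Ioo 0 1 under f is Ioi 0
  have himg : f '' Ioo 0 1 = Ioi 0 := by
    ext s
    constructor
    · rintro ⟨t, ⟨ht0, ht1⟩, rfl⟩
      have : 0 < (1 - t)/(2*γ*t) := by
        apply div_pos (by linarith) (by positivity)
      exact this
    · intro hs
      have hs : (0:ℝ) < s := hs
      refine ⟨1/(1+2*γ*s), ⟨by positivity, ?_⟩, ?_⟩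
      · rw [div_lt_one (by positivity)]; nlinarith
      · rw [hf]
        have h1 : (1:ℝ)+2*γ*s ≠ 0 := by positivity
        field_simp
        ring
  have hderiv : ∀ t ∈ Ioo (0:ℝ) 1, HasDerivWithinAt f (-(1/(2*γ*t^2))) (Ioo 0 1) t := by
    intro t ht
    have ht0 : (0:ℝ) < t := ht.1
    have hden : HasDerivAt (fun y : ℝ => 2*γ*y) (2*γ) t := by
      simpa using (hasDerivAt_id t).const_mul (2*γ)
    have hnum : HasDerivAt (fun y : ℝ => 1 - y) (-1) t := by
      simpa using (hasDerivAt_id t).const_sub 1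
    have := hnum.div hden (by positivity)
    refine this.hasDerivWithinAt.congr_deriv ?_
    field_simp
    ring
  have hinj : InjOn f (Ioo 0 1) := by
    intro t1 h1 t2 h2 heq
    have h10 : (0:ℝ) < t1 := h1.1
    have h20 : (0:ℝ) < t2 := h2.1
    rw [hf] at heq
    simp only at heq
    rw [div_eq_div_iff (by positivity) (by positivity)] at heq
    nlinarith
  -- pointwise identity on Ioo 0 1
  have hpt : ∀ t ∈ Ioo (0:ℝ) 1, |(-(1/(2*γ*t^2)))| • g (f t)
      = Real.sqrt γ / 2 * (t ^ (α - 1/2) * (1 - (1 - γ) * t) ^ (-(3:ℝ)/2)) := by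
    intro t ht
    obtain ⟨ht0, ht1⟩ := ht
    have hw : 0 < 1 - (1-γ)*t := hw_pos hγ ht0 ht1.le
    have e1' : 1/2 + f t = (1-(1-γ)*t)/(2*γ*t) := by
      rw [hf]; field_simp; ring
    have e1 : 1 / (1/2 + f t) = (2*γ*t)/(1-(1-γ)*t) := by
      rw [e1', one_div_div]
    have e2' : 1/(2*γ) + f t = 1/(2*γ*t) := by
      rw [hf]; field_simp; ring
    have e2 : 1 / (1/(2*γ) + f t) = 2*γ*t := by
      rw [e2', one_div_one_div]
    have e3 : |(-(1/(2*γ*t^2)))| = 1/(2*γ*t^2) := by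
      rw [abs_neg, abs_of_pos (by positivity)]
    rw [smul_eq_mul, e3, hg]
    simp only [e1, e2]
    have := rpow_algebra (α := α) hγ hα ht0 ht1
    calc 1/(2*γ*t^2) * ((1/2 : ℝ) ^ ((1:ℝ)/2) / Real.Gamma (1/2)
          * (((2*γ*t)/(1-(1-γ)*t)) ^ ((1:ℝ)/2 + 1) * Real.Gamma (1/2 + 1))
          * ((1/(2*γ) : ℝ) ^ α / Real.Gamma α * ((2*γ*t) ^ (α + 0) * Real.Gamma (α + 0))))
        = 1/(2*γ*t^2) * ((1/2 : ℝ) ^ ((1:ℝ)/2) / Real.Gamma (1/2)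
          * (((2*γ*t)/(1-(1-γ)*t)) ^ ((1:ℝ)/2 + 1) * Real.Gamma ((1:ℝ)/2 + 1)))
          * ((1/(2*γ) : ℝ) ^ α / Real.Gamma α * ((2*γ*t) ^ (α + 0) * Real.Gamma (α + 0))) := by
          ring_nf
      _ = _ := this
  have hIntIoo : IntegrableOn (fun t => |(-(1/(2*γ*t^2)))| • g (f t)) (Ioo 0 1) := by
    have base : IntegrableOn (fun t : ℝ => Real.sqrt γ / 2
        * (t ^ (α - 1/2) * (1 - (1 - γ) * t) ^ (-(3:ℝ)/2))) (Ioo 0 1) :=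
      (integrable_h hα hγ).const_mul _
    exact base.congr_fun (fun t ht => (hpt t ht).symm) measurableSet_Ioo
  have hIntg : IntegrableOn g (Ioi 0) := by
    rw [← himg]
    exact (integrableOn_image_iff_integrableOn_abs_deriv_smul
      measurableSet_Ioo hderiv hinj g).mpr hIntIoo
  have hcombine : ∀ s ∈ Ioi (0:ℝ),
      ENNReal.ofReal ((1/2 : ℝ) ^ ((1:ℝ)/2) / Real.Gamma (1/2)
          * ((1 / (1/2 + s)) ^ ((1:ℝ)/2 + 1) * Real.Gamma (1/2 + 1)))
        * ENNReal.ofReal ((1/(2*γ) : ℝ) ^ α / Real.Gamma α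
          * ((1 / (1/(2*γ) + s)) ^ (α + 0) * Real.Gamma (α + 0)))
      = ENNReal.ofReal (g s) := by
    intro s hs
    have hs : (0:ℝ) < s := hs
    have h1 : (0:ℝ) < 1/2 + s := by linarith
    rw [hg, ← ENNReal.ofReal_mul (by positivity)]
  rw [setLIntegral_congr_fun_ae measurableSet_Ioi (Filter.Eventually.of_forall hcombine)]
  rw [← ofReal_integral_eq_lintegral_ofReal hIntg (by
    filter_upwards [self_mem_ae_restrict measurableSet_Ioi] with s hs
    exact (hgpos s hs).le)]
  congr 1
  rw [← himg, integral_image_eq_integral_abs_deriv_smul measurableSet_Ioo hderiv hinj g,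
    setIntegral_congr_fun measurableSet_Ioo hpt, integral_const_mul,
    intervalIntegral.integral_of_le zero_le_one, integral_Ioc_eq_integral_Ioo]

lemma gammaMeasure_Iic_zero (a r : ℝ) : gammaMeasure a r (Iic 0) = 0 := by
  rw [gammaMeasure, withDensity_apply _ measurableSet_Iic, ← setLIntegral_congr Iio_ae_eq_Iic,
    setLIntegral_congr_fun_ae measurableSet_Iio
      (Filter.Eventually.of_forall fun x (hx : x < 0) => gammaPDF_of_neg hx), lintegral_zero]


/-- (Expectation in Proposition 2, with `₂F₁(3/2, 1/2+α; 3/2+α; 1−γ)` written via its Euler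
integral representation.)  Let `u ∼ Gamma(shape 1/2, scale 2)` and
`v ∼ Gamma(shape α, scale 2γ)` be independent.  Then
`E[u/(u+v)] = γ^{1/2} · (Γ(3/2)Γ(1/2+α)/(Γ(1/2)Γ(3/2+α))) · (Γ(3/2+α)/Γ(1/2+α)) ·
∫₀¹ t^{α−1/2}(1−(1−γ)t)^{−3/2} dt = (√γ/2) ∫₀¹ t^{α−1/2}(1−(1−γ)t)^{−3/2} dt`.
(`gammaMeasure a r` is parametrized by shape `a` and *rate* `r = 1/scale`.) -/
theorem expectation_of_gamma_ratio
    {Ω : Type*} [MeasurableSpace Ω] (μ : Measure Ω) [IsProbabilityMeasure μ]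
    (α γ : ℝ) (hα : 0 < α) (hγ : 0 < γ)
    (u v : Ω → ℝ) (hu : Measurable u) (hv : Measurable v)
    (huv : IndepFun u v μ)
    (hulaw : Measure.map u μ = gammaMeasure (1 / 2) (1 / 2))
    (hvlaw : Measure.map v μ = gammaMeasure α (1 / (2 * γ))) :
    (∫ ω, u ω / (u ω + v ω) ∂μ) =
      γ ^ ((1 : ℝ) / 2) *
        (Real.Gamma (3 / 2) * Real.Gamma (1 / 2 + α) /
          (Real.Gamma (1 / 2) * Real.Gamma (3 / 2 + α))) *
        (Real.Gamma (3 / 2 + α) / Real.Gamma (1 / 2 + α)) *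
        (∫ t in (0 : ℝ)..1, t ^ (α - 1 / 2) * (1 - (1 - γ) * t) ^ (-(3 : ℝ) / 2)) ∧
    (∫ ω, u ω / (u ω + v ω) ∂μ) =
      (Real.sqrt γ / 2) *
        (∫ t in (0 : ℝ)..1, t ^ (α - 1 / 2) * (1 - (1 - γ) * t) ^ (-(3 : ℝ) / 2)) := by
  
  have hr2 : (0:ℝ) < 1/(2*γ) := by positivity
  have i1 : IsProbabilityMeasure (gammaMeasure (1/2) (1/2)) :=
    isProbabilityMeasure_gammaMeasure (by norm_num) (by norm_num)
  have i2 : IsProbabilityMeasure (gammaMeasure α (1/(2*γ))) :=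
    isProbabilityMeasure_gammaMeasure hα hr2
  have hprod : μ.map (fun ω => (u ω, v ω))
      = (gammaMeasure (1/2) (1/2)).prod (gammaMeasure α (1/(2*γ))) := by
    rw [(indepFun_iff_map_prod_eq_prod_map_map hu.aemeasurable hv.aemeasurable).mp huv,
      hulaw, hvlaw]
  set pm := (gammaMeasure (1/2) (1/2)).prod (gammaMeasure α (1/(2*γ))) with hpm
  have hfm : Measurable fun p : ℝ × ℝ => p.1 / (p.1 + p.2) :=
    measurable_fst.div (measurable_fst.add measurable_snd)
  have hE : (∫ ω, u ω / (u ω + v ω) ∂μ) = ∫ p : ℝ × ℝ, p.1 / (p.1 + p.2) ∂pm := by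
    rw [← hprod, integral_map (hu.prodMk hv).aemeasurable hfm.aestronglyMeasurable]
  -- a.e. positivity
  have h1 : pm {p : ℝ × ℝ | p.1 ≤ 0} = 0 := by
    have : {p : ℝ × ℝ | p.1 ≤ 0} = Iic 0 ×ˢ (univ : Set ℝ) := by ext p; simp
    rw [hpm, this, Measure.prod_prod, gammaMeasure_Iic_zero, zero_mul]
  have h2 : pm {p : ℝ × ℝ | p.2 ≤ 0} = 0 := by
    have : {p : ℝ × ℝ | p.2 ≤ 0} = (univ : Set ℝ) ×ˢ Iic 0 := by ext p; simp
    rw [hpm, this, Measure.prod_prod, gammaMeasure_Iic_zero, mul_zero]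
  have hae1 : ∀ᵐ p : ℝ × ℝ ∂pm, 0 < p.1 := by
    rw [ae_iff]
    convert h1 using 2
    ext p; simp
  have hae2 : ∀ᵐ p : ℝ × ℝ ∂pm, 0 < p.2 := by
    rw [ae_iff]
    convert h2 using 2
    ext p; simp
  have hnn : 0 ≤ᵐ[pm] fun p : ℝ × ℝ => p.1 / (p.1 + p.2) := by
    filter_upwards [hae1, hae2] with p hp1 hp2
    positivity
  -- the value of the integral
  have hval : (∫ ω, u ω / (u ω + v ω) ∂μ) = Real.sqrt γ / 2
      * ∫ t in (0:ℝ)..1, t ^ (α - 1/2) * (1 - (1 - γ) * t) ^ (-(3:ℝ)/2) := by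
    rw [hE, integral_eq_lintegral_of_nonneg_ae hnn hfm.aestronglyMeasurable]
    rw [core hα hγ, cov hα hγ, ENNReal.toReal_ofReal]
    apply mul_nonneg (by positivity)
    apply intervalIntegral.integral_nonneg zero_le_one
    intro t ht
    have ht0 : 0 ≤ t := ht.1
    have hw : 0 ≤ 1 - (1-γ)*t := by
      rcases le_or_gt (1-γ) 0 with h | h
      · nlinarith [ht.2]
      · nlinarith [ht.2]
    exact mul_nonneg (Real.rpow_nonneg ht0 _) (Real.rpow_nonneg hw _)
  refine ⟨?_, hval⟩
  rw [hval]
  congr 1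
  have hΓ32 : Real.Gamma (3/2 : ℝ) = (1/2) * Real.Gamma (1/2) := by
    rw [show (3/2:ℝ) = 1/2 + 1 by norm_num]
    exact Real.Gamma_add_one (by norm_num)
  have p1 : 0 < Real.Gamma ((1:ℝ)/2) := Real.Gamma_pos_of_pos (by norm_num)
  have p2 : 0 < Real.Gamma ((1:ℝ)/2 + α) := Real.Gamma_pos_of_pos (by linarith)
  have p3 : 0 < Real.Gamma ((3:ℝ)/2 + α) := Real.Gamma_pos_of_pos (by linarith)
  rw [hΓ32, ← Real.sqrt_eq_rpow]
  field_simp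
end
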